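/- arXiv:1701.06844 — 9 statements merged into one kernel-verified Lean document; each statement's English description precedes it below -/
import Mathlib

section
/- Let F be a field of characteristic 0 and q ≥ 1. For all g, h : Fin q → ZMod 2 × ZMod 2, the product c_g · c_h equals ε · c_{g+h} for some sign ε ∈ {1, −1} (where g+h is the pointwise sum in (ZMod 2 × ZMod 2)^q). Consequently the subspaces R_g = span{c_g} satisfy R_g · R_h ⊆ R_{g+h}, i.e., they define a (ZMod 2 × ZMod 2)^q-grading on M_{2^q}(F). -/
open Matrix

def sigmaP (F : Type*) [Field F] (u : ZMod 2 × ZMod 2) : Matrix (Fin 2) (Fin 2) F :=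
  if u = (0, 0) then !![1, 0; 0, 1]
  else if u = (1, 0) then !![1, 0; 0, -1]
  else if u = (0, 1) then !![0, 1; 1, 0]
  else !![0, 1; -1, 0]

def pauliKron (F : Type*) [Field F] : {q : ℕ} → (Fin q → ZMod 2 × ZMod 2) →
    Matrix (Fin (2 ^ q)) (Fin (2 ^ q)) F
  | 0, _ => 1
  | q + 1, g =>
      Matrix.reindex (finProdFinEquiv.trans (finCongr (pow_succ 2 q).symm))
        (finProdFinEquiv.trans (finCongr (pow_succ 2 q).symm))
        (Matrix.kroneckerMap (· * ·) (pauliKron F (fun i => g i.castSucc))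
          (sigmaP F (g (Fin.last q))))

set_option maxHeartbeats 1000000 in
lemma sigmaP_mul (F : Type*) [Field F] (u v : ZMod 2 × ZMod 2) :
    ∃ ε : F, (ε = 1 ∨ ε = -1) ∧ sigmaP F u * sigmaP F v = ε • sigmaP F (u + v) := by
  obtain ⟨u1, u2⟩ := u
  obtain ⟨v1, v2⟩ := v
  fin_cases u1 <;> fin_cases u2 <;> fin_cases v1 <;> fin_cases v2 <;>
    first
    | (refine ⟨1, Or.inl rfl, ?_⟩
       ext i j; fin_cases i <;> fin_cases j <;>
         simp +decide [sigmaP, Matrix.mul_apply, Fin.sum_univ_two]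
       done)
    | (refine ⟨-1, Or.inr rfl, ?_⟩
       ext i j; fin_cases i <;> fin_cases j <;>
         simp +decide [sigmaP, Matrix.mul_apply, Fin.sum_univ_two]
       done)

lemma pauliKron_mul_aux (F : Type*) [Field F] (q : ℕ) (g h : Fin q → ZMod 2 × ZMod 2) :
    ∃ ε : F, (ε = 1 ∨ ε = -1) ∧
      pauliKron F g * pauliKron F h = ε • pauliKron F (g + h) := by
  induction q with
  | zero => exact ⟨1, Or.inl rfl, by simp [pauliKron]⟩
  | succ q ih =>
    obtain ⟨ε₁, hε₁, h1⟩ := ih (fun i => g i.castSucc) (fun i => h i.castSucc)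
    obtain ⟨ε₂, hε₂, h2⟩ := sigmaP_mul F (g (Fin.last q)) (h (Fin.last q))
    refine ⟨ε₁ * ε₂, ?_, ?_⟩
    · rcases hε₁ with rfl | rfl <;> rcases hε₂ with rfl | rfl <;> simp
    · show Matrix.reindex _ _ _ * Matrix.reindex _ _ _ = _
      simp only [Matrix.reindex_apply, Matrix.submatrix_mul_equiv]
      rw [show pauliKron F (g + h) = Matrix.reindex
          (finProdFinEquiv.trans (finCongr (pow_succ 2 q).symm))
          (finProdFinEquiv.trans (finCongr (pow_succ 2 q).symm))
          (Matrix.kroneckerMap (· * ·) (pauliKron F (fun i => (g + h) i.castSucc))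
            (sigmaP F ((g + h) (Fin.last q)))) from rfl]
      rw [show (fun i : Fin q => (g + h) i.castSucc) =
          (fun i => g i.castSucc) + (fun i => h i.castSucc) from rfl, Pi.add_apply]
      rw [← Matrix.mul_kronecker_mul, h1, h2, Matrix.smul_kronecker, Matrix.kronecker_smul,
        smul_smul]
      simp [Matrix.reindex_apply, Matrix.submatrix_smul]

/-- The product of two homogeneous basis matrices `c_g · c_h` equals `± c_{g+h}`;
consequently the spans of the `c_g` define a `(ZMod 2 × ZMod 2)^q`-grading on
`M_{2^q}(F)`. -/
theorem pauliKron_mul (F : Type*) [Field F] [CharZero F] (q : ℕ) (hq : 1 ≤ q) :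
    (∀ g h : Fin q → ZMod 2 × ZMod 2, ∃ ε : F, (ε = 1 ∨ ε = -1) ∧
      pauliKron F g * pauliKron F h = ε • pauliKron F (g + h)) ∧
    ∀ g h : Fin q → ZMod 2 × ZMod 2,
      ∀ x ∈ Submodule.span F {pauliKron F g},
        ∀ y ∈ Submodule.span F {pauliKron F h},
          x * y ∈ Submodule.span F {pauliKron F (g + h)} := by
  refine ⟨fun g h => pauliKron_mul_aux F q g h, ?_⟩
  intro g h x hx y hy
  rw [Submodule.mem_span_singleton] at hx hy ⊢
  obtain ⟨a, rfl⟩ := hx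
  obtain ⟨b, rfl⟩ := hy
  obtain ⟨ε, -, hmul⟩ := pauliKron_mul_aux F q g h
  refine ⟨a * b * ε, ?_⟩
  rw [smul_mul_smul_comm, hmul, smul_smul]
end

section
/- Let F be a field of characteristic 0 and q ≥ 1. For every g : Fin q → ZMod 2 × ZMod 2 with g ≠ 0 one has trace(c_g) = 0, and the subspace of traceless 2^q × 2^q matrices (the Lie algebra sl_{2^q}(F)) equals the linear span of {c_g : g ≠ 0}; i.e., sl_{2^q}(F) is a homogeneous subspace of the grading. -/
open Matrix

lemma trace_sigmaP (F : Type*) [Field F] (u : ZMod 2 × ZMod 2) :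
    Matrix.trace (sigmaP F u) = if u = 0 then 2 else 0 := by
  obtain ⟨a, b⟩ := u
  fin_cases a <;> fin_cases b <;>
    simp +decide [sigmaP, trace_fin_two, Prod.ext_iff, show (1 : ZMod 2) ≠ 0 by decide] <;> norm_num

lemma trace_reindex' {m n α : Type*} [Fintype m] [Fintype n] [AddCommMonoid α]
    (A : Matrix m m α) (e : m ≃ n) : Matrix.trace (Matrix.reindex e e A) = Matrix.trace A := by
  simp only [Matrix.trace, Matrix.diag, Matrix.reindex_apply, Matrix.submatrix_apply]
  exact Equiv.sum_comp e.symm fun i => A i i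

lemma trace_pauliKron (F : Type*) [Field F] :
    ∀ {q : ℕ} (g : Fin q → ZMod 2 × ZMod 2),
      Matrix.trace (pauliKron F g) = if g = 0 then (2 ^ q : F) else 0
  | 0, g => by
    have hg : g = 0 := funext fun i => i.elim0
    simp [pauliKron, hg, Matrix.trace_one]
  | q + 1, g => by
    have h1 : Matrix.trace (pauliKron F g) =
        Matrix.trace (pauliKron F (fun i => g i.castSucc)) *
          Matrix.trace (sigmaP F (g (Fin.last q))) := by
      rw [← Matrix.trace_kronecker]
      exact trace_reindex' _ _
    have hg : g = 0 ↔ (fun i : Fin q => g i.castSucc) = 0 ∧ g (Fin.last q) = 0 := by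
      constructor
      · rintro rfl; exact ⟨rfl, rfl⟩
      · rintro ⟨h2, h3⟩
        funext i
        refine Fin.lastCases h3 (fun j => ?_) i
        exact congrFun h2 j
    rw [h1, trace_pauliKron F (fun i => g i.castSucc), trace_sigmaP]
    by_cases h2 : (fun i : Fin q => g i.castSucc) = 0 <;>
      by_cases h3 : g (Fin.last q) = 0 <;>
      simp [hg, h2, h3, pow_succ]

lemma span_sigmaP (F : Type*) [Field F] [CharZero F] :
    Submodule.span F (Set.range (sigmaP F)) = ⊤ := by
  rw [eq_top_iff]
  rintro A -
  have hA : A = ((A 0 0 + A 1 1) / 2) • sigmaP F (0, 0) + ((A 0 0 - A 1 1) / 2) • sigmaP F (1, 0)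
      + ((A 0 1 + A 1 0) / 2) • sigmaP F (0, 1) + ((A 0 1 - A 1 0) / 2) • sigmaP F (1, 1) := by
    ext i j
    fin_cases i <;> fin_cases j <;>
      simp [sigmaP, Prod.ext_iff, show (1 : ZMod 2) ≠ 0 by decide] <;> ring
  have h : ∀ u, sigmaP F u ∈ Submodule.span F (Set.range (sigmaP F)) :=
    fun u => Submodule.subset_span ⟨u, rfl⟩
  rw [hA]
  exact add_mem (add_mem (add_mem (Submodule.smul_mem _ _ (h _)) (Submodule.smul_mem _ _ (h _)))
    (Submodule.smul_mem _ _ (h _))) (Submodule.smul_mem _ _ (h _))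

lemma stdBasis_kron {m n p r : Type*} [DecidableEq m] [DecidableEq n] [DecidableEq p]
    [DecidableEq r] (F : Type*) [Field F] (a : m) (b : n) (i : p) (j : r) (c : F) :
    Matrix.single (a, i) (b, j) c =
      Matrix.kroneckerMap (· * ·) (Matrix.single a b c) (Matrix.single i j 1) := by
  ext ⟨a', i'⟩ ⟨b', j'⟩
  simp only [Matrix.single, Matrix.kroneckerMap_apply, Matrix.of_apply, Prod.mk.injEq]
  split_ifs <;> simp_all

lemma map₂_kron_top (F : Type*) [Field F] (m n : Type*) [Fintype m] [Fintype n]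
    [DecidableEq m] [DecidableEq n] :
    Submodule.map₂ (Matrix.kroneckerMapBilinear (LinearMap.mul F F))
      (⊤ : Submodule F (Matrix m m F)) (⊤ : Submodule F (Matrix n n F)) = ⊤ := by
  rw [eq_top_iff]
  rintro M -
  rw [Matrix.matrix_eq_sum_single M]
  refine Submodule.sum_mem _ fun p _ => Submodule.sum_mem _ fun r _ => ?_
  obtain ⟨a, i⟩ := p
  obtain ⟨b, j⟩ := r
  rw [stdBasis_kron]
  have := Submodule.apply_mem_map₂ (Matrix.kroneckerMapBilinear (LinearMap.mul F F))
    (Submodule.mem_top (x := Matrix.single a b (M (a, i) (b, j))))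
    (Submodule.mem_top (x := Matrix.single i j (1 : F)))
  simpa [Matrix.kroneckerMapBilinear_apply_apply] using this

lemma span_pauliKron (F : Type*) [Field F] [CharZero F] :
    ∀ q : ℕ, Submodule.span F (Set.range (pauliKron F (q := q))) = ⊤
  | 0 => by
    rw [eq_top_iff]
    rintro A -
    have hA : A = A 0 0 • pauliKron F (fun _ : Fin 0 => 0) := by
      ext i j
      fin_cases i <;> fin_cases j <;> simp [pauliKron]
    rw [hA]
    exact Submodule.smul_mem _ _ (Submodule.subset_span ⟨_, rfl⟩)
  | q + 1 => by
    set e : Fin (2 ^ q) × Fin 2 ≃ Fin (2 ^ (q + 1)) :=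
      finProdFinEquiv.trans (finCongr (pow_succ 2 q).symm) with he
    have hr : Set.range (pauliKron F (q := q + 1)) =
        ⇑(Matrix.reindexLinearEquiv F F e e) ''
          Set.image2 (fun A B => Matrix.kroneckerMapBilinear (LinearMap.mul F F) A B)
            (Set.range (pauliKron F (q := q))) (Set.range (sigmaP F)) := by
      ext M
      constructor
      · rintro ⟨g, rfl⟩
        refine ⟨_, Set.mem_image2_of_mem ⟨fun i => g i.castSucc, rfl⟩ ⟨g (Fin.last q), rfl⟩, ?_⟩
        simp [pauliKron, Matrix.kroneckerMapBilinear_apply_apply,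
          Matrix.reindexLinearEquiv_apply, he]
      · rintro ⟨_, ⟨A, ⟨g₀, rfl⟩, B, ⟨u, rfl⟩, rfl⟩, rfl⟩
        refine ⟨Fin.snoc g₀ u, ?_⟩
        have h1 : (fun i : Fin q => (Fin.snoc g₀ u : Fin (q + 1) → ZMod 2 × ZMod 2) i.castSucc) = g₀ := by
          funext i; simp
        have h2 : (Fin.snoc g₀ u : Fin (q + 1) → ZMod 2 × ZMod 2) (Fin.last q) = u := by simp
        simp [pauliKron, h1, h2, Matrix.kroneckerMapBilinear_apply_apply,
          Matrix.reindexLinearEquiv_apply, he]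
    rw [hr, ← LinearEquiv.coe_coe, Submodule.span_image, ← Submodule.map₂_span_span, span_pauliKron F q, span_sigmaP F,
      map₂_kron_top, Submodule.map_top, LinearEquiv.range]

/-- For `g ≠ 0` the matrix `c_g` is traceless, and the traceless matrices
`sl_{2^q}(F)` are exactly the span of the `c_g` with `g ≠ 0`: the Lie algebra
`sl_{2^q}` is homogeneous in the Pauli grading. -/
theorem pauliKron_sl (F : Type*) [Field F] [CharZero F] (q : ℕ) (hq : 1 ≤ q) :
    (∀ g : Fin q → ZMod 2 × ZMod 2, g ≠ 0 → Matrix.trace (pauliKron F g) = 0) ∧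
    Submodule.span F (pauliKron F '' {g : Fin q → ZMod 2 × ZMod 2 | g ≠ 0}) =
      LinearMap.ker (Matrix.traceLinearMap (Fin (2 ^ q)) F F) := by
  have htr : ∀ g : Fin q → ZMod 2 × ZMod 2, g ≠ 0 → Matrix.trace (pauliKron F g) = 0 := by
    intro g hg; rw [trace_pauliKron, if_neg hg]
  refine ⟨htr, ?_⟩
  have hsub : Submodule.span F (pauliKron F '' {g : Fin q → ZMod 2 × ZMod 2 | g ≠ 0}) ≤
      LinearMap.ker (Matrix.traceLinearMap (Fin (2 ^ q)) F F) := by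
    rw [Submodule.span_le]
    rintro _ ⟨g, hg, rfl⟩
    exact LinearMap.mem_ker.2 (htr g hg)
  refine le_antisymm hsub fun A hA => ?_
  have hA' : Matrix.trace A = 0 := LinearMap.mem_ker.1 hA
  have hmem : A ∈ Submodule.span F (Set.range (pauliKron F (q := q))) := by
    rw [span_pauliKron]; trivial
  have hrange : Set.range (pauliKron F (q := q)) ⊆
      insert (pauliKron F 0) (pauliKron F '' {g : Fin q → ZMod 2 × ZMod 2 | g ≠ 0}) := by
    rintro _ ⟨g, rfl⟩
    by_cases h : g = 0
    · subst h; exact Set.mem_insert _ _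
    · exact Set.mem_insert_of_mem _ ⟨g, h, rfl⟩
  have hmem2 := Submodule.span_mono hrange hmem
  rw [Submodule.span_insert] at hmem2
  obtain ⟨y, hy, z, hz, hA2⟩ := Submodule.mem_sup.1 hmem2
  obtain ⟨a, rfl⟩ := Submodule.mem_span_singleton.1 hy
  have htr0 : Matrix.trace (pauliKron F (0 : Fin q → ZMod 2 × ZMod 2)) = (2 ^ q : F) := by
    rw [trace_pauliKron, if_pos rfl]
  have hz0 : Matrix.trace z = 0 := LinearMap.mem_ker.1 (hsub hz)
  have hmul : a * 2 ^ q = 0 := by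
    have h := congrArg Matrix.trace hA2
    rw [Matrix.trace_add, Matrix.trace_smul, htr0, hz0, add_zero, hA'] at h
    simpa [smul_eq_mul] using h
  have ha : a = 0 := by
    rcases mul_eq_zero.1 hmul with h | h
    · exact h
    · exact absurd h (pow_ne_zero _ two_ne_zero)
  rw [← hA2, ha, zero_smul, zero_add]
  exact hz
end

section
/- Let F be a field of characteristic 0 and q ≥ 1. For every g : Fin q → ZMod 2 × ZMod 2 with g ≠ 0, there exists h : Fin q → ZMod 2 × ZMod 2 such that c_h · c_g = −(c_g · c_h); consequently the commutator [c_h, c_g] = c_h c_g − c_g c_h equals 2·c_h·c_g and is nonzero. -/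
open Matrix Kronecker

def pSign (u v : ZMod 2 × ZMod 2) : ZMod 2 := u.1 * v.2 + u.2 * v.1

lemma sigmaP_mul_comm (F : Type*) [Field F] (u v : ZMod 2 × ZMod 2) :
    sigmaP F u * sigmaP F v
      = (if pSign u v = 0 then (1 : F) else -1) • (sigmaP F v * sigmaP F u) := by
  obtain ⟨a, b⟩ := u
  obtain ⟨c, d⟩ := v
  fin_cases a <;> fin_cases b <;> fin_cases c <;> fin_cases d <;>
    simp +decide [sigmaP, pSign, Matrix.mul_fin_two, Matrix.smul_of, Matrix.smul_cons,
      Matrix.smul_empty]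

lemma sigmaP_det (F : Type*) [Field F] (u : ZMod 2 × ZMod 2) : (sigmaP F u).det ≠ 0 := by
  obtain ⟨a, b⟩ := u
  fin_cases a <;> fin_cases b <;> simp +decide [sigmaP, Matrix.det_fin_two_of]

lemma reindex_mul {F : Type*} [Field F] {n m : Type*} [Fintype n] [Fintype m]
    [DecidableEq n] [DecidableEq m] (e : n ≃ m) (M N : Matrix n n F) :
    Matrix.reindex e e M * Matrix.reindex e e N = Matrix.reindex e e (M * N) := by
  simp [Matrix.reindex_apply, Matrix.submatrix_mul_equiv]

lemma kron_mul {F : Type*} [Field F] {n : Type*} [Fintype n]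
    (A B : Matrix n n F) (a b : Matrix (Fin 2) (Fin 2) F) :
    Matrix.kroneckerMap (· * ·) A a * Matrix.kroneckerMap (· * ·) B b
      = Matrix.kroneckerMap (· * ·) (A * B) (a * b) :=
  (Matrix.mul_kronecker_mul _ _ _ _).symm

lemma kron_smul {F : Type*} [Field F] {n : Type*}
    (r s : F) (A : Matrix n n F) (a : Matrix (Fin 2) (Fin 2) F) :
    Matrix.kroneckerMap (· * ·) (r • A) (s • a)
      = (r * s) • Matrix.kroneckerMap (· * ·) A a := by
  rw [show Matrix.kroneckerMap (· * ·) (r • A) (s • a) = (r • A) ⊗ₖ (s • a) from rfl,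
    Matrix.smul_kronecker, Matrix.kronecker_smul, smul_smul]

lemma pauliKron_mul_comm (F : Type*) [Field F] :
    ∀ (q : ℕ) (h g : Fin q → ZMod 2 × ZMod 2),
    pauliKron F h * pauliKron F g
      = (∏ i, if pSign (h i) (g i) = 0 then (1 : F) else -1) • (pauliKron F g * pauliKron F h)
  | 0, h, g => by simp [pauliKron]
  | q + 1, h, g => by
    have IH := pauliKron_mul_comm F q (fun i => h i.castSucc) (fun i => g i.castSucc)
    have S := sigmaP_mul_comm F (h (Fin.last q)) (g (Fin.last q))
    simp only [pauliKron]
    rw [reindex_mul, reindex_mul, kron_mul, kron_mul, IH, S, kron_smul, Fin.prod_univ_castSucc]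
    simp only [Matrix.reindex_apply]
    split <;> ext i j <;> simp

lemma pauliKron_det_ne_zero (F : Type*) [Field F] :
    ∀ (q : ℕ) (g : Fin q → ZMod 2 × ZMod 2), (pauliKron F g).det ≠ 0
  | 0, g => by simp [pauliKron]
  | q + 1, g => by
    have IH := pauliKron_det_ne_zero F q (fun i => g i.castSucc)
    show (Matrix.reindex _ _ _).det ≠ 0
    rw [Matrix.det_reindex_self,
      show Matrix.kroneckerMap (· * ·) (pauliKron F fun i => g i.castSucc)
        (sigmaP F (g (Fin.last q)))
        = (pauliKron F fun i => g i.castSucc) ⊗ₖ sigmaP F (g (Fin.last q)) from rfl,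
      Matrix.det_kronecker]
    exact mul_ne_zero (pow_ne_zero _ IH) (pow_ne_zero _ (sigmaP_det F _))

lemma exists_pSign_ne (v : ZMod 2 × ZMod 2) (hv : v ≠ 0) : ∃ u, pSign u v ≠ 0 := by
  revert hv; revert v; decide

/-- For every `g ≠ 0` there is an `h` with `c_h` anticommuting with `c_g`; hence the
commutator `[c_h, c_g]` equals `2·c_h·c_g` and is nonzero. -/
theorem pauliKron_exists_anticomm (F : Type*) [Field F] [CharZero F]
    (q : ℕ) (hq : 1 ≤ q) (g : Fin q → ZMod 2 × ZMod 2) (hg : g ≠ 0) :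
    ∃ h : Fin q → ZMod 2 × ZMod 2,
      pauliKron F h * pauliKron F g = -(pauliKron F g * pauliKron F h) ∧
      pauliKron F h * pauliKron F g - pauliKron F g * pauliKron F h =
        (2 : F) • (pauliKron F h * pauliKron F g) ∧
      pauliKron F h * pauliKron F g - pauliKron F g * pauliKron F h ≠ 0 := by
  obtain ⟨i, hi⟩ := Function.ne_iff.mp hg
  obtain ⟨u, hu⟩ := exists_pSign_ne (g i) hi
  refine ⟨fun j => if j = i then u else 0, ?_⟩
  set h : Fin q → ZMod 2 × ZMod 2 := fun j => if j = i then u else 0 with hh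
  have hprod : (∏ j, if pSign (h j) (g j) = 0 then (1 : F) else -1) = -1 := by
    rw [Finset.prod_eq_single i]
    · simp [hh, hu]
    · intro j _ hj
      simp [hh, hj, pSign]
    · simp
  have key : pauliKron F h * pauliKron F g = -(pauliKron F g * pauliKron F h) := by
    rw [pauliKron_mul_comm F q h g, hprod, neg_one_smul]
  have hne : pauliKron F h * pauliKron F g ≠ 0 := by
    intro h0
    have : (pauliKron F h * pauliKron F g).det ≠ 0 := by
      rw [Matrix.det_mul]
      exact mul_ne_zero (pauliKron_det_ne_zero F q h) (pauliKron_det_ne_zero F q g)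
    haveI hnz : NeZero (2 ^ q) := ⟨pow_ne_zero q two_ne_zero⟩
    haveI hne' : Nonempty (Fin (2 ^ q)) := ⟨⟨0, by positivity⟩⟩
    rw [h0, Matrix.det_zero] at this
    exact this rfl
  have heq : pauliKron F h * pauliKron F g - pauliKron F g * pauliKron F h
      = (2 : F) • (pauliKron F h * pauliKron F g) := by
    have : pauliKron F g * pauliKron F h = -(pauliKron F h * pauliKron F g) := by
      rw [key, neg_neg]
    rw [this, sub_neg_eq_add, two_smul]
  refine ⟨key, heq, ?_⟩
  rw [heq]
  intro h0
  apply hne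
  have := congrArg (fun M => (2 : F)⁻¹ • M) h0
  simpa [smul_smul, inv_mul_cancel₀ (two_ne_zero (α := F))] using this
end

section
/- Let F be a field of characteristic 0 and q ≥ 1, t = 2^q. The family {c_g : the number of indices i with g i = (1,1) is even} is a basis of the space of symmetric t×t matrices over F, and the family {c_g : the number of indices i with g i = (1,1) is odd} is a basis of the space of skew-symmetric t×t matrices over F. In particular these families have cardinalities t(t+1)/2 and t(t−1)/2 respectively. -/
open Matrix

/-- The submodule of symmetric matrices. -/
def symmMatrices (F : Type*) [Field F] (n : Type*) [Fintype n] :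
    Submodule F (Matrix n n F) where
  carrier := {A | Aᵀ = A}
  zero_mem' := Matrix.transpose_zero
  add_mem' := by
    intro a b ha hb
    simp only [Set.mem_setOf_eq] at *
    rw [Matrix.transpose_add, ha, hb]
  smul_mem' := by
    intro c a ha
    simp only [Set.mem_setOf_eq] at *
    rw [Matrix.transpose_smul, ha]

/-- The submodule of skew-symmetric matrices. -/
def skewMatrices (F : Type*) [Field F] (n : Type*) [Fintype n] :
    Submodule F (Matrix n n F) where
  carrier := {A | Aᵀ = -A}
  zero_mem' := by simp
  add_mem' := by
    intro a b ha hb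
    simp only [Set.mem_setOf_eq] at *
    rw [Matrix.transpose_add, ha, hb, neg_add]
  smul_mem' := by
    intro c a ha
    simp only [Set.mem_setOf_eq] at *
    rw [Matrix.transpose_smul, ha, smul_neg]

namespace PauliAux

open Kronecker

/-- number of `(1,1)` entries of `g` -/
def cntP {q : ℕ} (g : Fin q → ZMod 2 × ZMod 2) : ℕ :=
  (Finset.univ.filter fun i => g i = (1, 1)).card

variable {F : Type*} [Field F]

lemma zmod2sq_cases (u : ZMod 2 × ZMod 2) :
    u = (0, 0) ∨ u = (1, 0) ∨ u = (0, 1) ∨ u = (1, 1) := by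
  revert u; decide

lemma sigmaP00 : sigmaP F (0, 0) = !![1, 0; 0, 1] := by rw [sigmaP, if_pos rfl]
lemma sigmaP10 : sigmaP F (1, 0) = !![1, 0; 0, -1] := by
  rw [sigmaP, if_neg (by decide), if_pos rfl]
lemma sigmaP01 : sigmaP F (0, 1) = !![0, 1; 1, 0] := by
  rw [sigmaP, if_neg (by decide), if_neg (by decide), if_pos rfl]
lemma sigmaP11 : sigmaP F (1, 1) = !![0, 1; -1, 0] := by
  rw [sigmaP, if_neg (by decide), if_neg (by decide), if_neg (by decide)]

lemma transpose_fin_two' (a b c d : F) : !![a, b; c, d]ᵀ = !![a, c; b, d] := by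
  ext i j; fin_cases i <;> fin_cases j <;> simp

lemma sigmaP_transpose (u : ZMod 2 × ZMod 2) :
    (sigmaP F u)ᵀ = (-1 : F) ^ (if u = (1, 1) then 1 else 0) • sigmaP F u := by
  rcases zmod2sq_cases u with h | h | h | h <;> subst h
  · rw [if_neg (by decide), pow_zero, one_smul, sigmaP00, transpose_fin_two']
  · rw [if_neg (by decide), pow_zero, one_smul, sigmaP10, transpose_fin_two']
  · rw [if_neg (by decide), pow_zero, one_smul, sigmaP01, transpose_fin_two']
  · rw [if_pos rfl, pow_one, neg_one_smul, sigmaP11, transpose_fin_two']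
    ext i j; fin_cases i <;> fin_cases j <;> simp

lemma trace_sigmaP (u v : ZMod 2 × ZMod 2) :
    trace ((sigmaP F u)ᵀ * sigmaP F v) = if u = v then 2 else 0 := by
  rcases zmod2sq_cases u with h | h | h | h <;> subst h <;>
      rcases zmod2sq_cases v with h | h | h | h <;> subst h <;>
    simp only [sigmaP00, sigmaP10, sigmaP01, sigmaP11, transpose_fin_two',
      Matrix.mul_fin_two, Matrix.trace_fin_two_of]
  all_goals first
    | (rw [if_neg (by decide)]; norm_num)
    | norm_num

lemma cntP_succ {q : ℕ} (g : Fin (q + 1) → ZMod 2 × ZMod 2) :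
    cntP g = cntP (fun i => g i.castSucc) + (if g (Fin.last q) = (1, 1) then 1 else 0) := by
  rw [cntP, cntP, Finset.card_filter, Finset.card_filter, Fin.sum_univ_castSucc]

lemma pauliKron_succ {q : ℕ} (g : Fin (q + 1) → ZMod 2 × ZMod 2) :
    pauliKron F g =
      Matrix.reindex (finProdFinEquiv.trans (finCongr (pow_succ 2 q).symm))
        (finProdFinEquiv.trans (finCongr (pow_succ 2 q).symm))
        ((pauliKron F (fun i => g i.castSucc)) ⊗ₖ (sigmaP F (g (Fin.last q)))) := rfl

lemma pauliKron_transpose : ∀ {q : ℕ} (g : Fin q → ZMod 2 × ZMod 2),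
    (pauliKron F g)ᵀ = (-1 : F) ^ cntP g • pauliKron F g
  | 0, g => by
    simp [pauliKron, cntP]
  | q + 1, g => by
    rw [pauliKron_succ, cntP_succ, Matrix.reindex_apply, Matrix.transpose_submatrix,
      ← Matrix.kroneckerMap_transpose]
    show (Matrix.kroneckerMap (· * ·) _ _).submatrix _ _ = _
    rw [pauliKron_transpose (fun i => g i.castSucc), sigmaP_transpose,
      Matrix.smul_kronecker, Matrix.kronecker_smul, smul_smul, ← pow_add]
    rfl

lemma trace_submatrix_equiv' {n m : Type*} [Fintype n] [Fintype m] (e : n ≃ m)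
    (M : Matrix m m F) : trace (M.submatrix e e) = trace M := by
  simp only [Matrix.trace, Matrix.diag, Matrix.submatrix_apply]
  exact e.sum_comp (fun j => M j j)

lemma trace_pauliKron_mul : ∀ {q : ℕ} (g h : Fin q → ZMod 2 × ZMod 2),
    trace ((pauliKron F g)ᵀ * pauliKron F h) = if g = h then (2 : F) ^ q else 0
  | 0, g, h => by
    have : g = h := Subsingleton.elim _ _
    simp [pauliKron, this, Matrix.trace]
  | q + 1, g, h => by
    rw [pauliKron_succ, pauliKron_succ, Matrix.reindex_apply, Matrix.reindex_apply,
      Matrix.transpose_submatrix, Matrix.submatrix_mul_equiv, trace_submatrix_equiv',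
      ← Matrix.kroneckerMap_transpose]
    show trace ((Matrix.kroneckerMap (· * ·) _ _) * (Matrix.kroneckerMap (· * ·) _ _)) = _
    rw [show ∀ (A : Matrix (Fin (2^q)) (Fin (2^q)) F) (B : Matrix (Fin 2) (Fin 2) F)
        (C : Matrix (Fin (2^q)) (Fin (2^q)) F) (D : Matrix (Fin 2) (Fin 2) F),
        Matrix.kroneckerMap (· * ·) A B * Matrix.kroneckerMap (· * ·) C D
          = (A * C) ⊗ₖ (B * D) from fun A B C D => (Matrix.mul_kronecker_mul A C B D).symm,
      Matrix.trace_kronecker,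
      trace_pauliKron_mul (fun i : Fin q => g i.castSucc) (fun i : Fin q => h i.castSucc),
      trace_sigmaP]
    have hiff : g = h ↔ ((fun i : Fin q => g i.castSucc) = (fun i : Fin q => h i.castSucc)
        ∧ g (Fin.last q) = h (Fin.last q)) := by
      constructor
      · rintro rfl; exact ⟨rfl, rfl⟩
      · rintro ⟨h1, h2⟩
        funext i
        exact Fin.lastCases h2 (fun j => congrFun h1 j) i
    by_cases h1 : (fun i : Fin q => g i.castSucc) = (fun i : Fin q => h i.castSucc) <;>
      by_cases h2 : g (Fin.last q) = h (Fin.last q)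
    · rw [if_pos h1, if_pos h2, if_pos (hiff.2 ⟨h1, h2⟩), pow_succ]
    · rw [if_pos h1, if_neg h2, if_neg (fun hc => h2 (hiff.1 hc).2), mul_zero]
    · rw [if_neg h1, if_neg (fun hc => h1 (hiff.1 hc).1), zero_mul]
    · rw [if_neg h1, if_neg (fun hc => h1 (hiff.1 hc).1), zero_mul]

lemma pauliKron_li [CharZero F] (q : ℕ) :
    LinearIndependent F (pauliKron F (q := q)) := by
  rw [Fintype.linearIndependent_iff]
  intro a ha g₀
  have h2 : trace ((pauliKron F g₀)ᵀ * (∑ g : Fin q → ZMod 2 × ZMod 2, a g • pauliKron F g))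
      = a g₀ * 2 ^ q := by
    rw [Finset.mul_sum, trace_sum]
    rw [Finset.sum_eq_single g₀]
    · rw [Matrix.mul_smul, trace_smul, trace_pauliKron_mul, if_pos rfl, smul_eq_mul]
    · intro b _ hb
      rw [Matrix.mul_smul, trace_smul, trace_pauliKron_mul, if_neg (fun hc => hb hc.symm),
        smul_zero]
    · intro hg; exact absurd (Finset.mem_univ g₀) hg
  rw [ha, Matrix.mul_zero, trace_zero] at h2
  have h3 : (2 : F) ^ q ≠ 0 := pow_ne_zero _ two_ne_zero
  exact (mul_eq_zero.1 h2.symm).resolve_right h3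

lemma pauliKron_span [CharZero F] (q : ℕ) :
    Submodule.span F (Set.range (pauliKron F (q := q))) = ⊤ := by
  apply (pauliKron_li q).span_eq_top_of_card_eq_finrank
  simp only [Module.finrank_matrix, Module.finrank_self, mul_one, Fintype.card_fun,
    Fintype.card_prod, ZMod.card, Fintype.card_fin, ← mul_pow]

lemma basis_of_span {ι M : Type*} [AddCommGroup M] [Module F M]
    (S : Submodule F M) (f : ι → M)
    (hli : LinearIndependent F f) (hmem : ∀ i, f i ∈ S)
    (hspan : Submodule.span F (Set.range f) = S) :
    ∃ b : Module.Basis ι F S, ∀ i, (b i : M) = f i := by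
  let v : ι → S := fun i => ⟨f i, hmem i⟩
  have hv : S.subtype ∘ v = f := rfl
  have hli' : LinearIndependent F v := by
    apply LinearIndependent.of_comp S.subtype
    rw [hv]; exact hli
  have hsp : ⊤ ≤ Submodule.span F (Set.range v) := by
    have hmap : (Submodule.span F (Set.range v)).map S.subtype = S := by
      rw [Submodule.map_span, ← Set.range_comp, hv, hspan]
    have hmap2 : (⊤ : Submodule F S).map S.subtype = S := by
      rw [Submodule.map_top, Submodule.range_subtype]
    exact le_of_eq (Submodule.map_injective_of_injective S.injective_subtype
      (hmap.trans hmap2.symm)).symm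
  refine ⟨Module.Basis.mk hli' hsp, fun i => ?_⟩
  rw [Module.Basis.mk_apply]

lemma count_evens (q : ℕ) :
    2 * (Finset.univ.filter fun g : Fin q → ZMod 2 × ZMod 2 => Even (cntP g)).card
      = 4 ^ q + 2 ^ q ∧
    2 * (Finset.univ.filter fun g : Fin q → ZMod 2 × ZMod 2 => ¬ Even (cntP g)).card
      = 4 ^ q - 2 ^ q := by
  classical
  set E := (Finset.univ.filter fun g : Fin q → ZMod 2 × ZMod 2 => Even (cntP g)).card with hE
  set O := (Finset.univ.filter fun g : Fin q → ZMod 2 × ZMod 2 => ¬ Even (cntP g)).card with hO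
  have hsum : E + O = 4 ^ q := by
    rw [hE, hO, Finset.card_filter_add_card_filter_not, Finset.card_univ,
      Fintype.card_fun, Fintype.card_prod, ZMod.card, Fintype.card_fin]
  have hdiff : (E : ℤ) - O = 2 ^ q := by
    have h1 : ∑ g : Fin q → ZMod 2 × ZMod 2, (-1 : ℤ) ^ cntP g = 2 ^ q := by
      have hterm : ∀ g : Fin q → ZMod 2 × ZMod 2,
          (-1 : ℤ) ^ cntP g = ∏ i, (if g i = (1, 1) then -1 else 1) := by
        intro g
        rw [Finset.prod_ite, Finset.prod_const, Finset.prod_const, one_pow, mul_one, cntP]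
      simp_rw [hterm]
      have h2 : ∑ u : ZMod 2 × ZMod 2, (if u = (1, 1) then (-1 : ℤ) else 1) = 2 := by
        have e1 : ∀ u : ZMod 2 × ZMod 2,
            (if u = (1, 1) then (-1 : ℤ) else 1) = (if u = (1, 1) then (-2 : ℤ) else 0) + 1 := by
          intro u; split_ifs <;> norm_num
        simp_rw [e1]
        rw [Finset.sum_add_distrib, Finset.sum_ite_eq' Finset.univ ((1, 1) : ZMod 2 × ZMod 2)
          (fun _ => (-2 : ℤ)), Finset.sum_const, Finset.card_univ, Fintype.card_prod,
          ZMod.card]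
        simp
      have hps := Fintype.prod_sum (ι := Fin q) (κ := fun _ => ZMod 2 × ZMod 2)
        (f := fun _ u => if u = (1, 1) then (-1 : ℤ) else 1)
      simp only [h2, Finset.prod_const, Finset.card_univ, Fintype.card_fin] at hps
      exact hps.symm
    rw [← Finset.sum_filter_add_sum_filter_not Finset.univ
      (fun g : Fin q → ZMod 2 × ZMod 2 => Even (cntP g))] at h1
    have hA : ∑ g ∈ (Finset.univ.filter fun g : Fin q → ZMod 2 × ZMod 2 => Even (cntP g)),
        (-1 : ℤ) ^ cntP g = E := by
      rw [Finset.sum_congr rfl (fun g hg => (Finset.mem_filter.1 hg).2.neg_one_pow),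
        Finset.sum_const, nsmul_eq_mul, mul_one, hE]
    have hB : ∑ g ∈ (Finset.univ.filter fun g : Fin q → ZMod 2 × ZMod 2 => ¬ Even (cntP g)),
        (-1 : ℤ) ^ cntP g = -O := by
      rw [Finset.sum_congr rfl (fun g hg =>
          (Nat.not_even_iff_odd.1 (Finset.mem_filter.1 hg).2).neg_one_pow),
        Finset.sum_const, nsmul_eq_mul, mul_neg_one, hO]
    rw [hA, hB] at h1
    linarith [h1]
  constructor
  · have : (2 * E : ℤ) = 4 ^ q + 2 ^ q := by push_cast [← hsum]; linarith
    exact_mod_cast this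
  · have h2q' : 2 ^ q ≤ 4 ^ q := Nat.pow_le_pow_left (by norm_num) q
    have : (2 * O : ℤ) = 4 ^ q - 2 ^ q := by push_cast [← hsum]; linarith
    zify [h2q']
    exact this

end PauliAux

/-- The `c_g` with an even number of `σ₃`-factors form a basis of the symmetric
matrices, and those with an odd number form a basis of the skew-symmetric matrices;
these families have cardinalities `t(t+1)/2` and `t(t−1)/2` where `t = 2^q`. -/
theorem pauliKron_symm_skew_bases (F : Type*) [Field F] [CharZero F]
    (q : ℕ) (hq : 1 ≤ q) :
    (∃ b : Module.Basis {g : Fin q → ZMod 2 × ZMod 2 //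
        Even (Finset.univ.filter fun i => g i = (1, 1)).card} F
        (symmMatrices F (Fin (2 ^ q))),
      ∀ g, (b g : Matrix (Fin (2 ^ q)) (Fin (2 ^ q)) F) = pauliKron F g.1) ∧
    (∃ b : Module.Basis {g : Fin q → ZMod 2 × ZMod 2 //
        Odd (Finset.univ.filter fun i => g i = (1, 1)).card} F
        (skewMatrices F (Fin (2 ^ q))),
      ∀ g, (b g : Matrix (Fin (2 ^ q)) (Fin (2 ^ q)) F) = pauliKron F g.1) ∧
    Nat.card {g : Fin q → ZMod 2 × ZMod 2 //
        Even (Finset.univ.filter fun i => g i = (1, 1)).card} =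
      2 ^ q * (2 ^ q + 1) / 2 ∧
    Nat.card {g : Fin q → ZMod 2 × ZMod 2 //
        Odd (Finset.univ.filter fun i => g i = (1, 1)).card} =
      2 ^ q * (2 ^ q - 1) / 2 := by
  classical
  open PauliAux in
  -- span facts
  have hSevLe : Submodule.span F (pauliKron F (q := q) '' {g | Even (cntP g)})
      ≤ symmMatrices F (Fin (2 ^ q)) := by
    rw [Submodule.span_le]
    rintro _ ⟨g, hg, rfl⟩
    show (pauliKron F g)ᵀ = pauliKron F g
    rw [pauliKron_transpose, hg.neg_one_pow, one_smul]
  have hSodLe : Submodule.span F (pauliKron F (q := q) '' {g | Odd (cntP g)})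
      ≤ skewMatrices F (Fin (2 ^ q)) := by
    rw [Submodule.span_le]
    rintro _ ⟨g, hg, rfl⟩
    show (pauliKron F g)ᵀ = -(pauliKron F g)
    rw [pauliKron_transpose, hg.neg_one_pow, neg_one_smul]
  have hsup : Submodule.span F (pauliKron F (q := q) '' {g | Even (cntP g)})
      ⊔ Submodule.span F (pauliKron F (q := q) '' {g | Odd (cntP g)}) = ⊤ := by
    rw [← Submodule.span_union, ← Set.image_union]
    have huniv : {g : Fin q → ZMod 2 × ZMod 2 | Even (cntP g)} ∪ {g | Odd (cntP g)}
        = Set.univ := by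
      ext g; simp [Nat.even_or_odd]
    rw [huniv, Set.image_univ, pauliKron_span]
  have hSymmEq : Submodule.span F (pauliKron F (q := q) '' {g | Even (cntP g)})
      = symmMatrices F (Fin (2 ^ q)) := by
    refine le_antisymm hSevLe ?_
    intro A hA
    have hAmem : A ∈ (⊤ : Submodule F (Matrix (Fin (2 ^ q)) (Fin (2 ^ q)) F)) := trivial
    rw [← hsup] at hAmem
    rcases Submodule.mem_sup.1 hAmem with ⟨s, hs, k, hk, hsk⟩
    have hss : sᵀ = s := hSevLe hs
    have hks : kᵀ = -k := hSodLe hk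
    have hA' : Aᵀ = A := hA
    have hk1 : k = A - s := by rw [← hsk]; abel
    have hk2 : kᵀ = k := by rw [hk1, Matrix.transpose_sub, hA', hss]
    have hk0 : k = 0 := by
      rw [hk2] at hks
      have h3 : k + k = 0 := eq_neg_iff_add_eq_zero.1 hks
      have h4 : (2 : F) • k = 0 := by rw [two_smul]; exact h3
      rcases smul_eq_zero.1 h4 with h | h
      · exact absurd h two_ne_zero
      · exact h
    rw [← hsk, hk0, add_zero]
    exact hs
  have hSkewEq : Submodule.span F (pauliKron F (q := q) '' {g | Odd (cntP g)})
      = skewMatrices F (Fin (2 ^ q)) := by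
    refine le_antisymm hSodLe ?_
    intro A hA
    have hAmem : A ∈ (⊤ : Submodule F (Matrix (Fin (2 ^ q)) (Fin (2 ^ q)) F)) := trivial
    rw [← hsup] at hAmem
    rcases Submodule.mem_sup.1 hAmem with ⟨s, hs, k, hk, hsk⟩
    have hss : sᵀ = s := hSevLe hs
    have hks : kᵀ = -k := hSodLe hk
    have hA' : Aᵀ = -A := hA
    have hs1 : s = A - k := by rw [← hsk]; abel
    have hs2 : sᵀ = -s := by
      rw [hs1, Matrix.transpose_sub, hA', hks]; abel
    have hs0 : s = 0 := by
      rw [hss] at hs2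
      have h3 : s + s = 0 := eq_neg_iff_add_eq_zero.1 hs2
      have h4 : (2 : F) • s = 0 := by rw [two_smul]; exact h3
      rcases smul_eq_zero.1 h4 with h | h
      · exact absurd h two_ne_zero
      · exact h
    rw [← hsk, hs0, zero_add]
    exact hk
  refine ⟨?_, ?_, ?_, ?_⟩
  · -- symmetric basis
    refine basis_of_span (symmMatrices F (Fin (2 ^ q)))
      (fun g : {g : Fin q → ZMod 2 × ZMod 2 // Even (cntP g)} => pauliKron F g.1)
      ?_ ?_ ?_
    · exact (pauliKron_li q).comp Subtype.val Subtype.val_injective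
    · rintro ⟨g, hg⟩
      show (pauliKron F g)ᵀ = pauliKron F g
      rw [pauliKron_transpose, hg.neg_one_pow, one_smul]
    · rw [show (fun g : {g : Fin q → ZMod 2 × ZMod 2 // Even (cntP g)} => pauliKron F g.1)
          = (pauliKron F (q := q)) ∘ Subtype.val from rfl,
        Set.range_comp, Subtype.range_coe_subtype]
      exact hSymmEq
  · -- skew basis
    refine basis_of_span (skewMatrices F (Fin (2 ^ q)))
      (fun g : {g : Fin q → ZMod 2 × ZMod 2 // Odd (cntP g)} => pauliKron F g.1)
      ?_ ?_ ?_
    · exact (pauliKron_li q).comp Subtype.val Subtype.val_injective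
    · rintro ⟨g, hg⟩
      show (pauliKron F g)ᵀ = -(pauliKron F g)
      rw [pauliKron_transpose, hg.neg_one_pow, neg_one_smul]
    · rw [show (fun g : {g : Fin q → ZMod 2 × ZMod 2 // Odd (cntP g)} => pauliKron F g.1)
          = (pauliKron F (q := q)) ∘ Subtype.val from rfl,
        Set.range_comp, Subtype.range_coe_subtype]
      exact hSkewEq
  · -- even count
    have hE := (count_evens q).1
    have h4 : (4 : ℕ) ^ q = 2 ^ q * 2 ^ q := by rw [← mul_pow]; norm_num
    have hprod : 2 ^ q * (2 ^ q + 1) = 4 ^ q + 2 ^ q := by rw [mul_add, mul_one, h4]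
    rw [Nat.card_eq_fintype_card, Fintype.card_subtype]
    show (Finset.univ.filter fun g : Fin q → ZMod 2 × ZMod 2 => Even (cntP g)).card
      = 2 ^ q * (2 ^ q + 1) / 2
    omega
  · -- odd count
    have hO := (count_evens q).2
    have h4 : (4 : ℕ) ^ q = 2 ^ q * 2 ^ q := by rw [← mul_pow]; norm_num
    have h1le : 1 ≤ 2 ^ q := Nat.one_le_two_pow
    have hprod : 2 ^ q * (2 ^ q - 1) = 4 ^ q - 2 ^ q := by
      rcases Nat.exists_eq_add_of_le h1le with ⟨n, hn⟩
      rw [h4, hn]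
      simp only [Nat.add_sub_cancel_left]
      ring_nf
      omega
    have hfe : (Finset.univ.filter fun g : Fin q → ZMod 2 × ZMod 2 => Odd (cntP g))
        = (Finset.univ.filter fun g : Fin q → ZMod 2 × ZMod 2 => ¬ Even (cntP g)) := by
      apply Finset.filter_congr
      intro g _
      rw [Nat.not_even_iff_odd]
    rw [Nat.card_eq_fintype_card, Fintype.card_subtype]
    show (Finset.univ.filter fun g : Fin q → ZMod 2 × ZMod 2 => Odd (cntP g)).card
      = 2 ^ q * (2 ^ q - 1) / 2
    rw [hfe]
    omega
end

section
/- Let d ≥ 1 and let n₁, …, n_d be nonnegative integers with sum n ≥ 1. Then, with the convention 0^0 = 1, one has n^(n−d) / (n₁^{n₁} ⋯ n_d^{n_d}) ≤ n! / (n₁! ⋯ n_d!) ≤ n^(n+1) / (n₁^{n₁} ⋯ n_d^{n_d}); equivalently, (1/n^d)·Φ(n; n₁,…,n_d)^n ≤ multinomial(n₁,…,n_d) ≤ n·Φ(n; n₁,…,n_d)^n, where Φ(n; n₁,…,n_d) = ∏_{i=1}^d (n_i/n)^{−n_i/n} (real powers, with 0^0 = 1). -/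
open Real


open Finset

/-- key per-coordinate inequality: `n^k·n! ≤ n^n·k!`. -/
lemma aux_fact_sub (n : ℕ) : ∀ i, i ≤ n → n.factorial ≤ n ^ i * (n - i).factorial := by
  intro i
  induction i with
  | zero => simp
  | succ i ih =>
    intro hi
    have h1 : n - i = (n - (i + 1)) + 1 := by omega
    calc n.factorial ≤ n ^ i * (n - i).factorial := ih (by omega)
      _ = n ^ i * ((n - (i+1)) + 1) * (n - (i+1)).factorial := by
          rw [h1, Nat.factorial_succ]; ring
      _ ≤ n ^ i * n * (n - (i+1)).factorial := by
          have : (n - (i+1)) + 1 ≤ n := by omega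
          exact Nat.mul_le_mul_right _ (Nat.mul_le_mul_left _ this)
      _ = n ^ (i+1) * (n - (i+1)).factorial := by ring

lemma aux_fact_add (n : ℕ) : ∀ m, n ^ m * n.factorial ≤ (n + m).factorial := by
  intro m
  induction m with
  | zero => simp
  | succ m ih =>
    calc n ^ (m+1) * n.factorial = n * (n ^ m * n.factorial) := by ring
      _ ≤ n * (n + m).factorial := Nat.mul_le_mul_left _ ih
      _ ≤ (n + m + 1) * (n + m).factorial := Nat.mul_le_mul_right _ (by omega)
      _ = (n + (m+1)).factorial := by
          rw [show n + (m+1) = (n + m) + 1 by ring, Nat.factorial_succ]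

lemma pow_mul_factorial_le (n k : ℕ) : n ^ k * n.factorial ≤ n ^ n * k.factorial := by
  rcases le_or_gt k n with h | h
  · have h2 := aux_fact_sub n (n - k) (by omega)
    have h3 : n - (n - k) = k := by omega
    rw [h3] at h2
    calc n ^ k * n.factorial ≤ n ^ k * (n ^ (n - k) * k.factorial) := Nat.mul_le_mul_left _ h2
      _ = n ^ (k + (n - k)) * k.factorial := by rw [pow_add]; ring
      _ = n ^ n * k.factorial := by congr 2; omega
  · have h2 := aux_fact_add n (k - n)
    have h3 : n + (k - n) = k := by omega
    rw [h3] at h2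
    calc n ^ k * n.factorial = n ^ n * (n ^ (k - n) * n.factorial) := by
          rw [← mul_assoc, ← pow_add]; congr 2; omega
      _ ≤ n ^ n * k.factorial := Nat.mul_le_mul_left _ h2

lemma two_pow_le_factorial_succ (k : ℕ) : 2 ^ k ≤ (k + 1).factorial := by
  induction k with
  | zero => simp
  | succ k ih =>
    rw [pow_succ, Nat.factorial_succ]
    calc 2 ^ k * 2 ≤ (k+1).factorial * 2 := Nat.mul_le_mul_right _ ih
      _ ≤ (k+1).factorial * (k + 1 + 1) := Nat.mul_le_mul_left _ (by omega)
      _ = (k + 1 + 1) * (k+1).factorial := by ring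

lemma multichoose_succ_eq_sum (m : ℕ) : ∀ n, Nat.multichoose (m+1) n = ∑ b ∈ Finset.range (n+1), Nat.multichoose m b := by
  intro n
  induction n with
  | zero => simp [Nat.multichoose_zero_right]
  | succ n ih =>
    rw [Nat.multichoose_succ_succ, ih, Finset.sum_range_succ _ (n+1)]
    omega

lemma card_piAntidiag {ι : Type*} [DecidableEq ι] (s : Finset ι) (n : ℕ) :
    (Finset.piAntidiag s n).card = Nat.multichoose s.card n := by
  induction s using Finset.cons_induction generalizing n with
  | empty =>
    rcases Nat.eq_zero_or_pos n with rfl | h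
    · simp [Nat.multichoose_zero_right]
    · obtain ⟨n, rfl⟩ : ∃ m, n = m + 1 := ⟨n - 1, by omega⟩
      simp [Finset.piAntidiag_empty_of_ne_zero, Nat.multichoose_zero_succ]
  | cons i s hi ih =>
    rw [Finset.piAntidiag_cons hi n, Finset.card_disjiUnion]
    simp only [Finset.card_map]
    rw [Finset.Nat.sum_antidiagonal_eq_sum_range_succ (fun a b => (Finset.piAntidiag s b).card)]
    simp only [ih]
    rw [Finset.card_cons, multichoose_succ_eq_sum]
    exact Finset.sum_range_reflect (fun b => Nat.multichoose s.card b) (n+1) ▸ rfl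

lemma multichoose_le_pow {m n : ℕ} (hm : 1 ≤ m) (hmn : m ≤ n) :
    Nat.multichoose m n ≤ n ^ m := by
  obtain ⟨m', rfl⟩ : ∃ m', m = m' + 1 := ⟨m - 1, by omega⟩
  rw [Nat.multichoose_eq, show m' + 1 + n - 1 = n + m' by omega, Nat.choose_symm_add]
  have h1 : m'.factorial * (n + m').choose m' ≤ m'.factorial * ((m' + 1) * n ^ m') := by
    calc m'.factorial * (n + m').choose m' = (n + m').descFactorial m' :=
          (Nat.descFactorial_eq_factorial_mul_choose _ _).symm
      _ ≤ (n + m') ^ m' := Nat.descFactorial_le_pow _ _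
      _ ≤ (2 * n) ^ m' := Nat.pow_le_pow_left (by omega) _
      _ = 2 ^ m' * n ^ m' := by rw [mul_pow]
      _ ≤ (m' + 1).factorial * n ^ m' := Nat.mul_le_mul_right _ (two_pow_le_factorial_succ m')
      _ = m'.factorial * ((m' + 1) * n ^ m') := by rw [Nat.factorial_succ]; ring
  have h2 := Nat.le_of_mul_le_mul_left h1 m'.factorial_pos
  calc (n + m').choose m' ≤ (m' + 1) * n ^ m' := h2
    _ ≤ n * n ^ m' := Nat.mul_le_mul_right _ (by omega)
    _ = n ^ (m' + 1) := by rw [pow_succ]; ring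

lemma multinomial_term_le {d : ℕ} (s : Finset (Fin d)) (f k : Fin d → ℕ)
    (hk : ∑ i ∈ s, k i = ∑ i ∈ s, f i) :
    Nat.multinomial s k * ∏ i ∈ s, f i ^ k i ≤ Nat.multinomial s f * ∏ i ∈ s, f i ^ f i := by
  have hpos : 0 < (∏ i ∈ s, (k i).factorial) * ∏ i ∈ s, (f i).factorial := by positivity
  refine Nat.le_of_mul_le_mul_right ?_ hpos
  calc (Nat.multinomial s k * ∏ i ∈ s, f i ^ k i) *
        ((∏ i ∈ s, (k i).factorial) * ∏ i ∈ s, (f i).factorial)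
      = ((∏ i ∈ s, (k i).factorial) * Nat.multinomial s k) *
          ∏ i ∈ s, (f i ^ k i * (f i).factorial) := by
        rw [Finset.prod_mul_distrib]; ring
    _ = (∑ i ∈ s, f i).factorial * ∏ i ∈ s, (f i ^ k i * (f i).factorial) := by
        rw [Nat.multinomial_spec, hk]
    _ ≤ (∑ i ∈ s, f i).factorial * ∏ i ∈ s, (f i ^ (f i) * (k i).factorial) :=
        Nat.mul_le_mul_left _
          (Finset.prod_le_prod' fun i _ => pow_mul_factorial_le (f i) (k i))
    _ = ((∏ i ∈ s, (f i).factorial) * Nat.multinomial s f) *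
          ∏ i ∈ s, (f i ^ f i * (k i).factorial) := by
        rw [Nat.multinomial_spec]
    _ = (Nat.multinomial s f * ∏ i ∈ s, f i ^ f i) *
          ((∏ i ∈ s, (k i).factorial) * ∏ i ∈ s, (f i).factorial) := by
        rw [Finset.prod_mul_distrib]; ring

lemma nat_upper {d : ℕ} (f : Fin d → ℕ) :
    Nat.multinomial Finset.univ f * ∏ i, f i ^ f i ≤ (∑ i, f i) ^ (∑ i, f i) := by
  rw [Finset.sum_pow_eq_sum_piAntidiag Finset.univ f (∑ i, f i)]
  simp only [Nat.cast_id]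
  exact Finset.single_le_sum (f := fun k => Nat.multinomial Finset.univ k * ∏ i, f i ^ k i)
    (fun k _ => Nat.zero_le _) (by simp [Finset.mem_piAntidiag])

lemma nat_lower {d : ℕ} (f : Fin d → ℕ) (hn : 1 ≤ ∑ i, f i) :
    (∑ i, f i) ^ (∑ i, f i) ≤
      (∑ i, f i) ^ d * (Nat.multinomial Finset.univ f * ∏ i, f i ^ f i) := by
  classical
  set n := ∑ i, f i with hn_def
  set s : Finset (Fin d) := Finset.univ.filter fun i => f i ≠ 0 with hs
  have hsum : ∑ i ∈ s, f i = n := Finset.sum_filter_ne_zero _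
  have hfact_prod : ∏ i ∈ s, (f i).factorial = ∏ i, (f i).factorial := by
    refine Finset.prod_subset (Finset.filter_subset _ _) ?_
    intro i _ h
    simp only [hs, Finset.mem_filter, Finset.mem_univ, true_and, not_not] at h
    simp [h]
  have hpow_prod : ∏ i ∈ s, f i ^ f i = ∏ i, f i ^ f i := by
    refine Finset.prod_subset (Finset.filter_subset _ _) ?_
    intro i _ h
    simp only [hs, Finset.mem_filter, Finset.mem_univ, true_and, not_not] at h
    simp [h]
  have hmult : Nat.multinomial s f = Nat.multinomial Finset.univ f := by
    have h1 := Nat.multinomial_spec s f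
    have h2 := Nat.multinomial_spec Finset.univ f
    rw [hsum, hfact_prod] at h1
    rw [← hn_def] at h2
    exact Nat.eq_of_mul_eq_mul_left (by positivity) (h1.trans h2.symm)
  have hcard1 : 1 ≤ s.card := by
    obtain ⟨i, hi⟩ : ∃ i, f i ≠ 0 := by
      by_contra h
      push_neg at h
      simp [hn_def, h] at hn
    exact Finset.card_pos.mpr ⟨i, by simp [hs, hi]⟩
  have hcard_n : s.card ≤ n := by
    calc s.card = ∑ _i ∈ s, 1 := by simp
      _ ≤ ∑ i ∈ s, f i := Finset.sum_le_sum fun i hi => by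
          have : f i ≠ 0 := by simpa [hs] using (Finset.mem_filter.mp hi).2
          omega
      _ = n := hsum
  have hcard_d : s.card ≤ d := by
    simpa using Finset.card_le_univ s
  calc n ^ n = (∑ i ∈ s, f i) ^ n := by rw [hsum]
    _ = ∑ k ∈ Finset.piAntidiag s n, Nat.multinomial s k * ∏ i ∈ s, f i ^ k i := by
        rw [Finset.sum_pow_eq_sum_piAntidiag s f n]
        simp [Nat.cast_id]
    _ ≤ ∑ _k ∈ Finset.piAntidiag s n, Nat.multinomial s f * ∏ i ∈ s, f i ^ f i := by
        refine Finset.sum_le_sum fun k hk => ?_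
        have hk' := (Finset.mem_piAntidiag.mp hk).1
        exact multinomial_term_le s f k (by rw [hk', hsum])
    _ = (Finset.piAntidiag s n).card * (Nat.multinomial s f * ∏ i ∈ s, f i ^ f i) := by
        rw [Finset.sum_const, smul_eq_mul]
    _ ≤ n ^ d * (Nat.multinomial s f * ∏ i ∈ s, f i ^ f i) := by
        refine Nat.mul_le_mul_right _ ?_
        rw [card_piAntidiag]
        exact (multichoose_le_pow hcard1 hcard_n).trans (Nat.pow_le_pow_right hn hcard_d)
    _ = n ^ d * (Nat.multinomial Finset.univ f * ∏ i, f i ^ f i) := by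
        rw [hmult, hpow_prod]

/-- Stirling-type bounds for the multinomial coefficient: with `n = n₁ + ⋯ + n_d`,
`n^(n−d)/(n₁^{n₁}⋯n_d^{n_d}) ≤ n!/(n₁!⋯n_d!) ≤ n^(n+1)/(n₁^{n₁}⋯n_d^{n_d})`;
equivalently, `(1/n^d)·Φ^n ≤ multinomial ≤ n·Φ^n` where
`Φ = ∏ᵢ (nᵢ/n)^(−nᵢ/n)` (real powers, `0^0 = 1`). -/
theorem multinomial_stirling_bounds (d : ℕ) (hd : 1 ≤ d) (f : Fin d → ℕ)
    (hn : 1 ≤ ∑ i, f i) :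
    ((∑ i, f i : ℕ) : ℝ) ^ (((∑ i, f i : ℕ) : ℝ) - (d : ℝ)) /
        ∏ i, ((f i : ℝ) ^ (f i : ℝ)) ≤
      (Nat.multinomial Finset.univ f : ℝ) ∧
    (Nat.multinomial Finset.univ f : ℝ) ≤
      ((∑ i, f i : ℕ) : ℝ) ^ (((∑ i, f i : ℕ) : ℝ) + 1) /
        ∏ i, ((f i : ℝ) ^ (f i : ℝ)) ∧
    (1 / ((∑ i, f i : ℕ) : ℝ) ^ d) *
        (∏ i, ((f i : ℝ) / ((∑ i, f i : ℕ) : ℝ)) ^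
          (-((f i : ℝ) / ((∑ i, f i : ℕ) : ℝ)))) ^ ((∑ i, f i : ℕ) : ℝ) ≤
      (Nat.multinomial Finset.univ f : ℝ) ∧
    (Nat.multinomial Finset.univ f : ℝ) ≤
      ((∑ i, f i : ℕ) : ℝ) *
        (∏ i, ((f i : ℝ) / ((∑ i, f i : ℕ) : ℝ)) ^
          (-((f i : ℝ) / ((∑ i, f i : ℕ) : ℝ)))) ^ ((∑ i, f i : ℕ) : ℝ) := by
  classical
  set n := ∑ i, f i with hndef
  have fact1 := nat_upper f
  have fact2 := nat_lower f hn
  rw [← hndef] at fact1 fact2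
  have hx : (0:ℝ) < (n:ℝ) := by exact_mod_cast Nat.lt_of_lt_of_le Nat.zero_lt_one hn
  have hPnat : 0 < ∏ i, f i ^ f i := Finset.prod_pos fun i _ => by
    rcases Nat.eq_zero_or_pos (f i) with h | h
    · simp [h]
    · positivity
  have hP : (0:ℝ) < ((∏ i, f i ^ f i : ℕ) : ℝ) := by exact_mod_cast hPnat
  have hA : ∏ i, ((f i : ℝ) ^ ((f i : ℕ) : ℝ)) = ((∏ i, f i ^ f i : ℕ) : ℝ) := by
    simp only [Real.rpow_natCast]
    push_cast
    rfl
  have key1 : ((n:ℝ) ^ n / (n:ℝ) ^ d) / ((∏ i, f i ^ f i : ℕ) : ℝ) ≤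
      (Nat.multinomial Finset.univ f : ℝ) := by
    rw [div_le_iff₀ hP, div_le_iff₀ (by positivity : (0:ℝ) < (n:ℝ) ^ d)]
    calc (n:ℝ) ^ n ≤ (n:ℝ) ^ d *
          ((Nat.multinomial Finset.univ f : ℝ) * ((∏ i, f i ^ f i : ℕ) : ℝ)) := by
          exact_mod_cast fact2
      _ = (Nat.multinomial Finset.univ f : ℝ) * ((∏ i, f i ^ f i : ℕ) : ℝ) * (n:ℝ) ^ d := by
          ring
  have key2 : (Nat.multinomial Finset.univ f : ℝ) ≤
      ((n:ℝ) ^ n * (n:ℝ)) / ((∏ i, f i ^ f i : ℕ) : ℝ) := by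
    rw [le_div_iff₀ hP]
    have h1 : (Nat.multinomial Finset.univ f : ℝ) * ((∏ i, f i ^ f i : ℕ) : ℝ) ≤ (n:ℝ) ^ n := by
      exact_mod_cast fact1
    have h2 : (n:ℝ) ^ n ≤ (n:ℝ) ^ n * (n:ℝ) :=
      le_mul_of_one_le_right (by positivity) (by exact_mod_cast hn)
    linarith
  have hΦ : (∏ i, ((f i : ℝ) / ((n:ℕ) : ℝ)) ^ (-((f i : ℝ) / ((n:ℕ) : ℝ)))) ^ ((n:ℕ) : ℝ)
      = (n:ℝ) ^ n / ((∏ i, f i ^ f i : ℕ) : ℝ) := by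
    have hnz : (n:ℝ) ≠ 0 := ne_of_gt hx
    rw [Real.rpow_natCast, ← Finset.prod_pow]
    have hterm : ∀ i : Fin d, (((f i : ℝ) / (n:ℝ)) ^ (-((f i : ℝ) / (n:ℝ)))) ^ (n:ℕ)
        = (((f i : ℝ) / (n:ℝ)) ^ (f i : ℕ))⁻¹ := by
      intro i
      have h0 : (0:ℝ) ≤ (f i : ℝ) / (n:ℝ) := by positivity
      rw [← Real.rpow_natCast ((((f i : ℝ) / (n:ℝ))) ^ (-((f i : ℝ) / (n:ℝ)))) n,
        ← Real.rpow_mul h0,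
        show (-((f i : ℝ) / (n:ℝ))) * ((n:ℕ) : ℝ) = -((f i : ℕ) : ℝ) by field_simp,
        Real.rpow_neg h0, Real.rpow_natCast]
    rw [Finset.prod_congr rfl fun i _ => hterm i, Finset.prod_inv_distrib]
    have hinner : ∏ i, ((f i : ℝ) / (n:ℝ)) ^ (f i : ℕ)
        = ((∏ i, f i ^ f i : ℕ) : ℝ) / (n:ℝ) ^ n := by
      simp only [div_pow]
      rw [Finset.prod_div_distrib, Finset.prod_pow_eq_pow_sum]
      push_cast
      rw [← hndef]
    rw [hinner, inv_div]
  refine ⟨?_, ?_, ?_, ?_⟩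
  · rw [hA, Real.rpow_sub hx, Real.rpow_natCast, Real.rpow_natCast]
    exact key1
  · rw [hA, Real.rpow_add hx, Real.rpow_one, Real.rpow_natCast]
    exact key2
  · rw [hΦ]
    calc (1 / (n:ℝ) ^ d) * ((n:ℝ) ^ n / ((∏ i, f i ^ f i : ℕ) : ℝ))
        = ((n:ℝ) ^ n / (n:ℝ) ^ d) / ((∏ i, f i ^ f i : ℕ) : ℝ) := by ring
      _ ≤ (Nat.multinomial Finset.univ f : ℝ) := key1
  · rw [hΦ]
    calc (Nat.multinomial Finset.univ f : ℝ)
        ≤ ((n:ℝ) ^ n * (n:ℝ)) / ((∏ i, f i ^ f i : ℕ) : ℝ) := key2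
      _ = (n:ℝ) * ((n:ℝ) ^ n / ((∏ i, f i ^ f i : ℕ) : ℝ)) := by ring
end

section
/- Let t ≥ 2 be an integer and set a = t(t+1)/2, b = t(t−1)/2, c = t² − 1. For all real numbers x, y, z ≥ 0 satisfying a·x = b·y and a·x + b·y + c·z = 1, one has (with the convention 0^0 = 1) x^{−a·x} · y^{−b·y} · z^{−c·z} ≤ t² − 1 + t·√(t² − 1). -/
open Real

/-- With `a = t(t+1)/2`, `b = t(t−1)/2`, `c = t²−1`, any nonnegative reals `x, y, z`
with `a·x = b·y` and `a·x + b·y + c·z = 1` satisfy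
`x^(−a·x)·y^(−b·y)·z^(−c·z) ≤ t² − 1 + t·√(t² − 1)` (real powers, `0^0 = 1`). -/
theorem Phi_max_bound (t : ℕ) (ht : 2 ≤ t) (a b c : ℝ)
    (ha : a = t * (t + 1) / 2) (hb : b = t * (t - 1) / 2) (hc : c = (t : ℝ) ^ 2 - 1)
    (x y z : ℝ) (hx : 0 ≤ x) (hy : 0 ≤ y) (hz : 0 ≤ z)
    (hxy : a * x = b * y) (hsum : a * x + b * y + c * z = 1) :
    x ^ (-(a * x)) * y ^ (-(b * y)) * z ^ (-(c * z)) ≤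
      (t : ℝ) ^ 2 - 1 + t * Real.sqrt ((t : ℝ) ^ 2 - 1) := by
  have ht2 : (2:ℝ) ≤ (t:ℝ) := by exact_mod_cast ht
  have ha' : 0 < a := by rw [ha]; nlinarith
  have hb' : 0 < b := by rw [hb]; nlinarith
  have hc' : 0 < c := by rw [hc]; nlinarith
  set α := Real.sqrt (b/a) with hα
  set β := Real.sqrt (a/b) with hβ
  have hαpos : 0 < α := Real.sqrt_pos.2 (by positivity)
  have hβpos : 0 < β := Real.sqrt_pos.2 (by positivity)
  have hαβ : α * β = 1 := by
    rw [hα, hβ, ← Real.sqrt_mul (by positivity),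
      show b/a*(a/b) = 1 by field_simp, Real.sqrt_one]
  -- rewrite Φ
  have h1 : α ^ (a*x) * β ^ (b*y) = 1 := by
    rw [← hxy, ← Real.mul_rpow hαpos.le hβpos.le, hαβ, Real.one_rpow]
  have key : x ^ (-(a * x)) * y ^ (-(b * y)) * z ^ (-(c * z))
      = (α/x) ^ (a*x) * (β/y) ^ (b*y) * ((1:ℝ)/z) ^ (c*z) := by
    rw [div_eq_mul_inv α x, div_eq_mul_inv β y, div_eq_mul_inv 1 z,
        Real.mul_rpow hαpos.le (inv_nonneg.2 hx),
        Real.mul_rpow hβpos.le (inv_nonneg.2 hy),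
        Real.mul_rpow zero_le_one (inv_nonneg.2 hz),
        Real.inv_rpow hx, Real.inv_rpow hy, Real.inv_rpow hz,
        ← Real.rpow_neg hx, ← Real.rpow_neg hy, ← Real.rpow_neg hz,
        Real.one_rpow, one_mul]
    calc x ^ (-(a*x)) * y ^ (-(b*y)) * z ^ (-(c*z))
        = (α ^ (a*x) * β ^ (b*y)) * (x ^ (-(a*x)) * y ^ (-(b*y)) * z ^ (-(c*z))) := by
          rw [h1, one_mul]
      _ = α ^ (a*x) * x ^ (-(a*x)) * (β ^ (b*y) * y ^ (-(b*y))) * z ^ (-(c*z)) := by ring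
  rw [key]
  have amgm := Real.geom_mean_le_arith_mean3_weighted
    (mul_nonneg ha'.le hx) (mul_nonneg hb'.le hy) (mul_nonneg hc'.le hz)
    (show (0:ℝ) ≤ α/x by positivity) (show (0:ℝ) ≤ β/y by positivity)
    (show (0:ℝ) ≤ (1:ℝ)/z by positivity) hsum
  refine amgm.trans ?_
  -- bound each term
  have hT1 : a*x * (α/x) ≤ a*α := by
    rcases eq_or_lt_of_le hx with h | h
    · rw [← h]; simp [mul_nonneg ha'.le hαpos.le]
    · rw [show a*x*(α/x) = a*α by field_simp]
  have hT2 : b*y * (β/y) ≤ b*β := by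
    rcases eq_or_lt_of_le hy with h | h
    · rw [← h]; simp [mul_nonneg hb'.le hβpos.le]
    · rw [show b*y*(β/y) = b*β by field_simp]
  have hT3 : c*z * ((1:ℝ)/z) ≤ c := by
    rcases eq_or_lt_of_le hz with h | h
    · rw [← h]; simp [hc'.le]
    · rw [show c*z*((1:ℝ)/z) = c by field_simp]
  have haα : a * α = Real.sqrt (a*b) := by
    rw [hα, show a*b = a^2*(b/a) from by field_simp,
      Real.sqrt_mul (sq_nonneg a), Real.sqrt_sq ha'.le]
  have hbβ : b * β = Real.sqrt (a*b) := by
    rw [hβ, show a*b = b^2*(a/b) from by field_simp,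
      Real.sqrt_mul (sq_nonneg b), Real.sqrt_sq hb'.le]
  have hsab : Real.sqrt (a*b) = (t:ℝ)/2 * Real.sqrt ((t:ℝ)^2-1) := by
    rw [show a*b = ((t:ℝ)/2)^2 * ((t:ℝ)^2-1) from by rw [ha,hb]; ring,
      Real.sqrt_mul (sq_nonneg _), Real.sqrt_sq (by positivity)]
  have : a*α + b*β + c = (t : ℝ) ^ 2 - 1 + t * Real.sqrt ((t : ℝ) ^ 2 - 1) := by
    rw [haα, hbβ, hsab, hc]; ring
  linarith
end

section
/- Let t ≥ 2 be an integer, c = t² − 1, and define g : ℝ → ℝ by g(z) = c·z·ln(z) + (1 − c·z)·ln(1 − c·z) − (1/2)·(1 − c·z)·ln(c·t²). Set z₀ = (t² − 1 + t·√(t² − 1))⁻¹. Then z₀ ∈ (0, 1/c); for every z in the open interval (0, 1/c) the derivative of g vanishes at z if and only if z = z₀; the second derivative of g at z₀ is positive (so g has a local minimum at z₀); and g(z₀) = −ln(t² − 1 + t·√(t² − 1)). -/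
open Real

/-- Properties of `g(z) = cz·ln z + (1−cz)·ln(1−cz) − ½(1−cz)·ln(c·t²)` with
`c = t²−1`: `z₀ = (t²−1+t√(t²−1))⁻¹` lies in `(0, 1/c)`, it is the unique critical
point of `g` in `(0, 1/c)`, the second derivative there is positive (so `g` has a
local minimum at `z₀`), and `g(z₀) = −ln(t²−1+t√(t²−1))`. -/
theorem g_critical_point (t : ℕ) (ht : 2 ≤ t) (c : ℝ) (hc : c = (t : ℝ) ^ 2 - 1)
    (g : ℝ → ℝ)
    (hg : g = fun z => c * z * Real.log z + (1 - c * z) * Real.log (1 - c * z) -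
      (1 / 2) * (1 - c * z) * Real.log (c * (t : ℝ) ^ 2))
    (z₀ : ℝ) (hz₀ : z₀ = ((t : ℝ) ^ 2 - 1 + t * Real.sqrt ((t : ℝ) ^ 2 - 1))⁻¹) :
    z₀ ∈ Set.Ioo 0 (1 / c) ∧
    (∀ z ∈ Set.Ioo (0 : ℝ) (1 / c), (deriv g z = 0 ↔ z = z₀)) ∧
    0 < deriv (deriv g) z₀ ∧
    IsLocalMin g z₀ ∧
    g z₀ = -Real.log ((t : ℝ) ^ 2 - 1 + t * Real.sqrt ((t : ℝ) ^ 2 - 1)) := by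
  have htR : (2:ℝ) ≤ (t:ℝ) := by exact_mod_cast ht
  have hc3 : (3:ℝ) ≤ c := by nlinarith
  have hc0 : (0:ℝ) < c := by linarith
  set s : ℝ := Real.sqrt c with hs
  have hs0 : 0 < s := Real.sqrt_pos.2 hc0
  have hs2 : s ^ 2 = c := Real.sq_sqrt hc0.le
  have ht0 : (0:ℝ) < (t:ℝ) := by linarith
  have hts : 0 < (t:ℝ) * s := mul_pos ht0 hs0
  set A : ℝ := c + (t:ℝ) * s with hA
  have hA0 : 0 < A := by positivity
  have hz₀A : z₀ = A⁻¹ := by rw [hz₀, ← hc]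
  have hz₀pos : 0 < z₀ := by rw [hz₀A]; positivity
  have hz₀lt : z₀ < 1 / c := by
    rw [hz₀A, one_div]
    exact inv_strictAnti₀ hc0 (by linarith)
  set L : ℝ := Real.log ((t:ℝ) * s) with hL
  have hK : Real.log (c * (t:ℝ) ^ 2) = 2 * L := by
    have h1 : c * (t:ℝ) ^ 2 = ((t:ℝ) * s) ^ 2 := by rw [mul_pow, hs2]; ring
    rw [h1, Real.log_pow]; norm_num [hL]
  -- derivative of g on the interval
  have hderiv : ∀ z ∈ Set.Ioo (0:ℝ) (1/c), HasDerivAt g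
      (c * (Real.log z - Real.log (1 - c * z) + L)) z := by
    intro z hz
    obtain ⟨hz1, hz2⟩ := hz
    have h1cz : 0 < 1 - c * z := by
      have h := (lt_div_iff₀ hc0).1 hz2
      nlinarith
    have hu : HasDerivAt (fun z : ℝ => 1 - c * z) (-c) z := by
      simpa using ((hasDerivAt_id z).const_mul c).const_sub 1
    have d1 : HasDerivAt (fun z : ℝ => c * z * Real.log z) (c * Real.log z + c) z := by
      have h := ((hasDerivAt_id z).const_mul c).mul (Real.hasDerivAt_log hz1.ne')
      exact h.congr_deriv (by simp [hz1.ne'])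
    have dlog : HasDerivAt (fun z : ℝ => Real.log (1 - c * z)) ((1 - c*z)⁻¹ * (-c)) z :=
      by have := (Real.hasDerivAt_log h1cz.ne').comp z hu; exact this
    have d2 : HasDerivAt (fun z : ℝ => (1 - c * z) * Real.log (1 - c * z))
        (-c * Real.log (1 - c * z) - c) z := by
      have h := hu.mul dlog
      exact h.congr_deriv (by rw [mul_inv_cancel_left₀ h1cz.ne']; ring)
    have d3 : HasDerivAt (fun z : ℝ => (1/2) * (1 - c * z) * Real.log (c * (t:ℝ)^2))
        ((1/2) * (-c) * Real.log (c * (t:ℝ)^2)) z :=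
      (hu.const_mul (1/2)).mul_const (Real.log (c * (t:ℝ)^2))
    have h := (d1.add d2).sub d3
    rw [hg]
    exact h.congr_deriv (by rw [hK]; ring)
  have h1cz₀ : 1 - c * z₀ = (t:ℝ) * s / A := by
    rw [hz₀A]
    field_simp
    rw [hA]
    ring
  have h1cz₀pos : 0 < 1 - c * z₀ := by rw [h1cz₀]; positivity
  have hlogz₀ : Real.log z₀ = -Real.log A := by rw [hz₀A, Real.log_inv]
  have hlog1cz₀ : Real.log (1 - c * z₀) = L - Real.log A := by
    rw [h1cz₀, Real.log_div hts.ne' hA0.ne']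
  have hφ0 : Real.log z₀ - Real.log (1 - c * z₀) + L = 0 := by
    rw [hlogz₀, hlog1cz₀]; ring
  -- strict monotonicity of φ
  have hmono : ∀ x ∈ Set.Ioo (0:ℝ) (1/c), ∀ y ∈ Set.Ioo (0:ℝ) (1/c), x < y →
      Real.log x - Real.log (1 - c * x) + L < Real.log y - Real.log (1 - c * y) + L := by
    intro x hx y hy hxy
    have hx1 : 0 < x := hx.1
    have hy2 : 1 - c * y > 0 := by
      have : c * y < 1 := by
        have h := (lt_div_iff₀ hc0).1 hy.2
        nlinarith
      linarith
    have l1 : Real.log x < Real.log y := Real.log_lt_log hx1 hxy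
    have l2 : Real.log (1 - c * y) < Real.log (1 - c * x) :=
      Real.log_lt_log hy2 (by nlinarith)
    linarith
  have hz₀mem : z₀ ∈ Set.Ioo (0:ℝ) (1/c) := ⟨hz₀pos, hz₀lt⟩
  -- critical point characterization
  have hcrit : ∀ z ∈ Set.Ioo (0:ℝ) (1/c), (deriv g z = 0 ↔ z = z₀) := by
    intro z hz
    rw [(hderiv z hz).deriv]
    constructor
    · intro h0
      have hφz : Real.log z - Real.log (1 - c * z) + L = 0 := by
        rcases mul_eq_zero.1 h0 with h | h
        · exact absurd h hc0.ne'
        · exact h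
      rcases lt_trichotomy z z₀ with h | h | h
      · have := hmono z hz z₀ hz₀mem h
        rw [hφ0, hφz] at this; linarith
      · exact h
      · have := hmono z₀ hz₀mem z hz h
        rw [hφ0, hφz] at this; linarith
    · intro h; rw [h, hφ0, mul_zero]
  -- second derivative
  have hev : deriv g =ᶠ[nhds z₀]
      (fun z => c * (Real.log z - Real.log (1 - c * z) + L)) := by
    filter_upwards [Ioo_mem_nhds hz₀pos hz₀lt] with z hz
    exact (hderiv z hz).deriv
  have hu₀ : HasDerivAt (fun z : ℝ => 1 - c * z) (-c) z₀ := by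
    simpa using ((hasDerivAt_id z₀).const_mul c).const_sub 1
  have h2 : HasDerivAt (fun z => c * (Real.log z - Real.log (1 - c * z) + L))
      (c * (z₀⁻¹ + c * (1 - c * z₀)⁻¹)) z₀ := by
    have dlog : HasDerivAt (fun z : ℝ => Real.log (1 - c * z)) ((1 - c*z₀)⁻¹ * (-c)) z₀ :=
      by have := (Real.hasDerivAt_log h1cz₀pos.ne').comp z₀ hu₀; exact this
    have h := (((Real.hasDerivAt_log hz₀pos.ne').sub dlog).add_const L).const_mul c
    exact h.congr_deriv (by ring)
  have hderiv2 : deriv (deriv g) z₀ = c * (z₀⁻¹ + c * (1 - c * z₀)⁻¹) := by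
    rw [hev.deriv_eq]
    exact h2.deriv
  have hd2pos : 0 < deriv (deriv g) z₀ := by
    rw [hderiv2]
    have : 0 < z₀⁻¹ := inv_pos.2 hz₀pos
    have : 0 < (1 - c * z₀)⁻¹ := inv_pos.2 h1cz₀pos
    positivity
  -- local min
  have hlocmin : IsLocalMin g z₀ := by
    apply isLocalMin_of_deriv_Ioo hz₀pos hz₀lt
    · exact (hderiv z₀ hz₀mem).continuousAt
    · intro x hx
      exact ((hderiv x ⟨hx.1, lt_trans hx.2 hz₀lt⟩).differentiableAt).differentiableWithinAt
    · intro x hx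
      exact ((hderiv x ⟨lt_trans hz₀pos hx.1, hx.2⟩).differentiableAt).differentiableWithinAt
    · intro x hx
      have hxm : x ∈ Set.Ioo (0:ℝ) (1/c) := ⟨hx.1, lt_trans hx.2 hz₀lt⟩
      rw [(hderiv x hxm).deriv]
      have h := hmono x hxm z₀ hz₀mem hx.2
      rw [hφ0] at h
      exact (mul_neg_of_pos_of_neg hc0 h).le
    · intro x hx
      have hxm : x ∈ Set.Ioo (0:ℝ) (1/c) := ⟨lt_trans hz₀pos hx.1, hx.2⟩
      rw [(hderiv x hxm).deriv]
      have h := hmono z₀ hz₀mem x hxm hx.1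
      rw [hφ0] at h
      exact (mul_pos hc0 h).le
  -- value
  have hval : g z₀ = -Real.log A := by
    rw [hg]
    simp only
    rw [hlogz₀, hlog1cz₀, h1cz₀, hK, hz₀A]
    field_simp
    ring
  refine ⟨hz₀mem, hcrit, hd2pos, hlocmin, ?_⟩
  rw [hval, ← hc]
end

section
/- Let t ≥ 2 be an integer and set a = t(t+1)/2, b = t(t−1)/2, c = t² − 1, d = a + b + c. Let n₁, …, n_d be nonnegative integers with sum n ≥ 1 satisfying |(n₁ + ⋯ + n_a) − (n_{a+1} + ⋯ + n_{a+b})| ≤ 1. Then the multinomial coefficient satisfies n!/(n₁!⋯n_d!) ≤ (n+1)^{d+1} · (t² − 1 + t·√(t² − 1))^{n+1}. -/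
open Real

set_option maxHeartbeats 2000000 in
/-- Upper bound on the graded codimension summands: with `a = t(t+1)/2`,
`b = t(t−1)/2`, `c = t²−1`, `d = a+b+c`, for nonnegative integers `n₁,…,n_d` with sum
`n ≥ 1` such that the first `a` of them and the next `b` of them have sums differing
by at most `1`, the multinomial coefficient is at most
`(n+1)^(d+1)·(t²−1+t√(t²−1))^(n+1)`. -/
theorem multinomial_upper_bound (t : ℕ) (ht : 2 ≤ t) (a b c d : ℕ)
    (ha : a = t * (t + 1) / 2) (hb : b = t * (t - 1) / 2) (hc : c = t ^ 2 - 1)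
    (hd : d = a + b + c) (f : Fin a ⊕ Fin b ⊕ Fin c → ℕ) (n : ℕ)
    (hn : n = ∑ i, f i) (hn1 : 1 ≤ n)
    (hbal : |(∑ i, (f (Sum.inl i) : ℤ)) - ∑ i, (f (Sum.inr (Sum.inl i)) : ℤ)| ≤ 1) :
    (Nat.multinomial Finset.univ f : ℝ) ≤
      (n + 1 : ℝ) ^ (d + 1) *
        ((t : ℝ) ^ 2 - 1 + t * Real.sqrt ((t : ℝ) ^ 2 - 1)) ^ (n + 1) := by
  -- Natural number identities
  have h2a : 2 * a = t * (t + 1) := by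
    obtain ⟨k, hk⟩ := Nat.even_mul_succ_self t
    rw [ha, hk]; omega
  have h2b : 2 * b = t * (t - 1) := by
    have he : Even (t * (t - 1)) := by
      obtain ⟨k, hk⟩ := Nat.even_mul_succ_self (t - 1)
      have h1 : t - 1 + 1 = t := by omega
      rw [h1] at hk
      exact ⟨k, by rw [Nat.mul_comm]; omega⟩
    obtain ⟨k, hk⟩ := he
    rw [hb, hk]; omega
  have hb1 : 1 ≤ b := by
    have : 2 * 1 ≤ t * (t - 1) := Nat.mul_le_mul ht (by omega)
    omega
  -- Real versions
  have hT2 : (2 : ℝ) ≤ (t : ℝ) := by exact_mod_cast ht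
  have hA : 2 * (a : ℝ) = (t : ℝ) * ((t : ℝ) + 1) := by
    have := congrArg (fun m : ℕ => (m : ℝ)) h2a
    push_cast at this
    linarith
  have hB : 2 * (b : ℝ) = (t : ℝ) * ((t : ℝ) - 1) := by
    have := congrArg (fun m : ℕ => (m : ℝ)) h2b
    simp only [Nat.cast_mul, Nat.cast_ofNat, Nat.cast_sub (show 1 ≤ t by omega),
      Nat.cast_one] at this
    linarith
  have hB1 : (1 : ℝ) ≤ (b : ℝ) := by exact_mod_cast hb1
  have hBA : (b : ℝ) ≤ (a : ℝ) := by nlinarith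
  have hA1 : (1 : ℝ) ≤ (a : ℝ) := le_trans hB1 hBA
  have hA0 : (0 : ℝ) < (a : ℝ) := by linarith
  have hB0 : (0 : ℝ) < (b : ℝ) := by linarith
  have hE1 : (1 : ℝ) ≤ (t : ℝ) ^ 2 - 1 := by nlinarith
  have hE0 : (0 : ℝ) ≤ (t : ℝ) ^ 2 - 1 := by linarith
  have hCE : (c : ℝ) = (t : ℝ) ^ 2 - 1 := by
    rw [hc]
    have h1 : 1 ≤ t ^ 2 := by nlinarith
    push_cast [Nat.cast_sub h1]; ring
  have hAB : (a : ℝ) * (b : ℝ) = (t : ℝ) ^ 2 * ((t : ℝ) ^ 2 - 1) / 4 := by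
    have h4 : (2 * (a : ℝ)) * (2 * (b : ℝ))
        = ((t : ℝ) * ((t : ℝ) + 1)) * ((t : ℝ) * ((t : ℝ) - 1)) := by rw [hA, hB]
    nlinarith [h4]
  -- weights
  set u : ℝ := Real.sqrt ((b : ℝ) / (a : ℝ)) with hu
  set v : ℝ := Real.sqrt ((a : ℝ) / (b : ℝ)) with hv
  have hu0 : 0 ≤ u := Real.sqrt_nonneg _
  have hv0 : 0 ≤ v := Real.sqrt_nonneg _
  have huv : u * v = 1 := by
    rw [hu, hv, ← Real.sqrt_mul (by positivity)]
    rw [show (b : ℝ) / (a : ℝ) * ((a : ℝ) / (b : ℝ)) = 1 by field_simp]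
    exact Real.sqrt_one
  have hv1 : 1 ≤ v := by
    rw [hv, Real.le_sqrt one_pos.le (by positivity), one_pow, le_div_iff₀ hB0]
    linarith
  have huA : 1 / (a : ℝ) ≤ u := by
    rw [hu, Real.le_sqrt (by positivity) (by positivity), div_pow, one_pow,
      div_le_div_iff₀ (by positivity) hA0, sq]
    have h1 : (1 : ℝ) * (a : ℝ) ≤ (a : ℝ) * (a : ℝ) := by
      rw [one_mul]; exact le_mul_of_one_le_left hA0.le hA1
    have h2 : (a : ℝ) * (a : ℝ) ≤ (b : ℝ) * ((a : ℝ) * (a : ℝ)) :=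
      le_mul_of_one_le_left (by positivity) hB1
    linarith
  -- the weight function
  set x : Fin a ⊕ Fin b ⊕ Fin c → ℝ :=
    Sum.elim (fun _ => u) (Sum.elim (fun _ => v) (fun _ => 1)) with hx
  -- sums over blocks
  set p : ℕ := ∑ i : Fin a, f (Sum.inl i) with hp
  set q : ℕ := ∑ i : Fin b, f (Sum.inr (Sum.inl i)) with hq
  -- key inequality from the multinomial theorem
  have hmem : f ∈ Finset.piAntidiag Finset.univ n := by
    rw [Finset.mem_piAntidiag]
    exact ⟨hn.symm, fun i _ => Finset.mem_univ i⟩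
  have hxnn : ∀ i, 0 ≤ x i := by
    rintro (i | i | i) <;> simp [hx] <;> [exact hu0; exact hv0]
  have key : (Nat.multinomial Finset.univ f : ℝ) * ∏ i, x i ^ f i ≤ (∑ i, x i) ^ n := by
    rw [Finset.sum_pow_eq_sum_piAntidiag Finset.univ x n]
    refine Finset.single_le_sum
      (f := fun k => (Nat.multinomial Finset.univ k : ℝ) * ∏ i, x i ^ k i)
      (fun k _ => ?_) hmem
    have : 0 ≤ ∏ i, x i ^ k i := Finset.prod_nonneg fun i _ => pow_nonneg (hxnn i) _
    positivity
  -- compute the product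
  have hprod : ∏ i, x i ^ f i = u ^ p * v ^ q := by
    rw [Fintype.prod_sum_type, Fintype.prod_sum_type]
    simp only [hx, Sum.elim_inl, Sum.elim_inr, one_pow, Finset.prod_const_one,
      Finset.prod_pow_eq_pow_sum]
    rw [mul_one, ← hp, ← hq]
  -- compute the sum of weights
  have hsqAB : Real.sqrt ((a : ℝ) * (b : ℝ)) = (t : ℝ) / 2 * Real.sqrt ((t : ℝ) ^ 2 - 1) := by
    rw [hAB, show (t : ℝ) ^ 2 * ((t : ℝ) ^ 2 - 1) / 4 = ((t : ℝ) / 2) ^ 2 * ((t : ℝ) ^ 2 - 1)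
      by ring, Real.sqrt_mul (by positivity), Real.sqrt_sq (by linarith)]
  have hsum : ∑ i, x i = (t : ℝ) ^ 2 - 1 + (t : ℝ) * Real.sqrt ((t : ℝ) ^ 2 - 1) := by
    rw [Fintype.sum_sum_type, Fintype.sum_sum_type]
    simp only [hx, Sum.elim_inl, Sum.elim_inr, Finset.sum_const, Finset.card_univ,
      Fintype.card_fin, nsmul_eq_mul, mul_one]
    have hAu : (a : ℝ) * u = Real.sqrt ((a : ℝ) * (b : ℝ)) := by
      rw [hu, show (a : ℝ) * (b : ℝ) = (a : ℝ) ^ 2 * ((b : ℝ) / (a : ℝ)) by field_simp,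
        Real.sqrt_mul (by positivity), Real.sqrt_sq hA0.le]
    have hBv : (b : ℝ) * v = Real.sqrt ((a : ℝ) * (b : ℝ)) := by
      rw [hv, show (a : ℝ) * (b : ℝ) = (b : ℝ) ^ 2 * ((a : ℝ) / (b : ℝ)) by field_simp,
        Real.sqrt_mul (by positivity), Real.sqrt_sq hB0.le]
    rw [hAu, hBv, hCE, hsqAB]; ring
  -- lower bound on the product
  have hpq : p = q ∨ p = q + 1 ∨ q = p + 1 := by
    have hpz : (p : ℤ) = ∑ i : Fin a, (f (Sum.inl i) : ℤ) := by rw [hp]; push_cast; rfl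
    have hqz : (q : ℤ) = ∑ i : Fin b, (f (Sum.inr (Sum.inl i)) : ℤ) := by
      rw [hq]; push_cast; rfl
    rw [← hpz, ← hqz, abs_le] at hbal
    omega
  have hprodlb : 1 / (a : ℝ) ≤ u ^ p * v ^ q := by
    rcases hpq with h | h | h
    · rw [h, ← mul_pow, huv, one_pow, div_le_one hA0]
      linarith
    · rw [h, pow_succ, show u ^ q * u * v ^ q = (u * v) ^ q * u by rw [mul_pow]; ring,
        huv, one_pow, one_mul]
      exact huA
    · rw [h, pow_succ, show u ^ p * (v ^ p * v) = (u * v) ^ p * v by rw [mul_pow]; ring,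
        huv, one_pow, one_mul]
      calc 1 / (a : ℝ) ≤ 1 := by rw [div_le_one hA0]; linarith
        _ ≤ v := hv1
  -- combine
  have hsE1 : 1 ≤ Real.sqrt ((t : ℝ) ^ 2 - 1) := by
    rw [Real.le_sqrt one_pos.le hE0, one_pow]; exact hE1
  have hS0 : (0 : ℝ) ≤ (t : ℝ) ^ 2 - 1 + (t : ℝ) * Real.sqrt ((t : ℝ) ^ 2 - 1) := by
    have h1 : (0 : ℝ) ≤ (t : ℝ) * Real.sqrt ((t : ℝ) ^ 2 - 1) := by positivity
    linarith
  have hM : (Nat.multinomial Finset.univ f : ℝ)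
      ≤ (a : ℝ) * ((t : ℝ) ^ 2 - 1 + (t : ℝ) * Real.sqrt ((t : ℝ) ^ 2 - 1)) ^ n := by
    have h1 : (Nat.multinomial Finset.univ f : ℝ) * (1 / (a : ℝ))
        ≤ ((t : ℝ) ^ 2 - 1 + (t : ℝ) * Real.sqrt ((t : ℝ) ^ 2 - 1)) ^ n := by
      calc (Nat.multinomial Finset.univ f : ℝ) * (1 / (a : ℝ))
          ≤ (Nat.multinomial Finset.univ f : ℝ) * (u ^ p * v ^ q) :=
            mul_le_mul_of_nonneg_left hprodlb (Nat.cast_nonneg _)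
        _ = (Nat.multinomial Finset.univ f : ℝ) * ∏ i, x i ^ f i := by rw [hprod]
        _ ≤ (∑ i, x i) ^ n := key
        _ = ((t : ℝ) ^ 2 - 1 + (t : ℝ) * Real.sqrt ((t : ℝ) ^ 2 - 1)) ^ n := by rw [hsum]
    calc (Nat.multinomial Finset.univ f : ℝ)
        = (Nat.multinomial Finset.univ f : ℝ) * (1 / (a : ℝ)) * (a : ℝ) := by field_simp
      _ ≤ ((t : ℝ) ^ 2 - 1 + (t : ℝ) * Real.sqrt ((t : ℝ) ^ 2 - 1)) ^ n * (a : ℝ) :=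
          mul_le_mul_of_nonneg_right h1 hA0.le
      _ = (a : ℝ) * ((t : ℝ) ^ 2 - 1 + (t : ℝ) * Real.sqrt ((t : ℝ) ^ 2 - 1)) ^ n := by ring
  have hAS : (a : ℝ) ≤ (t : ℝ) ^ 2 - 1 + (t : ℝ) * Real.sqrt ((t : ℝ) ^ 2 - 1) := by
    have h1 : (t : ℝ) * 1 ≤ (t : ℝ) * Real.sqrt ((t : ℝ) ^ 2 - 1) :=
      mul_le_mul_of_nonneg_left hsE1 (by linarith)
    nlinarith [hA, hT2, h1]
  calc (Nat.multinomial Finset.univ f : ℝ)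
      ≤ (a : ℝ) * ((t : ℝ) ^ 2 - 1 + (t : ℝ) * Real.sqrt ((t : ℝ) ^ 2 - 1)) ^ n := hM
    _ ≤ ((t : ℝ) ^ 2 - 1 + (t : ℝ) * Real.sqrt ((t : ℝ) ^ 2 - 1)) *
        ((t : ℝ) ^ 2 - 1 + (t : ℝ) * Real.sqrt ((t : ℝ) ^ 2 - 1)) ^ n :=
          mul_le_mul_of_nonneg_right hAS (pow_nonneg hS0 n)
    _ = ((t : ℝ) ^ 2 - 1 + (t : ℝ) * Real.sqrt ((t : ℝ) ^ 2 - 1)) ^ (n + 1) := by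
          rw [pow_succ]; ring
    _ = 1 * ((t : ℝ) ^ 2 - 1 + (t : ℝ) * Real.sqrt ((t : ℝ) ^ 2 - 1)) ^ (n + 1) := by ring
    _ ≤ (n + 1 : ℝ) ^ (d + 1) *
        ((t : ℝ) ^ 2 - 1 + (t : ℝ) * Real.sqrt ((t : ℝ) ^ 2 - 1)) ^ (n + 1) := by
          refine mul_le_mul_of_nonneg_right ?_ (pow_nonneg hS0 _)
          apply one_le_pow₀
          have : (0 : ℝ) ≤ (n : ℝ) := Nat.cast_nonneg n
          linarith
end

section
/- Let t ≥ 2 be an integer and set a = t(t+1)/2, b = t(t−1)/2, c = t² − 1, d = a + b + c. For every real ε > 0 there exist infinitely many positive integers n for which there are nonnegative integers n₁, …, n_d with n₁ + ⋯ + n_d = n, with n₁ + ⋯ + n_a = n_{a+1} + ⋯ + n_{a+b}, and such that the multinomial coefficient satisfies n!/(n₁!⋯n_d!) ≥ (t² − 1 + t·√(t² − 1) − ε)^n. -/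
open Real

section Aux
open Nat

lemma log_factorial_ge (n : ℕ) : (n:ℝ) * Real.log n - n ≤ Real.log (n !) := by
  induction n with
  | zero => simp
  | succ n ih =>
    have hn1 : (0:ℝ) < (n:ℝ) + 1 := by positivity
    have key : (n:ℝ) * Real.log (n+1) - (n:ℝ) * Real.log n ≤ 1 := by
      rcases Nat.eq_zero_or_pos n with h | h
      · simp [h]
      have hn : (0:ℝ) < n := by exact_mod_cast h
      have : Real.log ((n+1)/n) ≤ (n+1)/n - 1 := Real.log_le_sub_one_of_pos (by positivity)
      have hlog : Real.log ((n+1)/n) = Real.log (n+1) - Real.log n :=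
        Real.log_div (by positivity) (by positivity)
      rw [hlog] at this
      have h2 : ((n:ℝ)+1)/n - 1 = 1/n := by field_simp; ring
      rw [h2] at this
      calc (n:ℝ) * Real.log (n+1) - (n:ℝ) * Real.log n
          = (n:ℝ) * (Real.log (n+1) - Real.log n) := by ring
        _ ≤ (n:ℝ) * (1/n) := by
            apply mul_le_mul_of_nonneg_left this (by positivity)
        _ = 1 := by field_simp
    have hfact : Real.log ((n+1)! : ℕ) = Real.log (n+1) + Real.log (n !) := by
      push_cast [Nat.factorial_succ]
      rw [Real.log_mul (by positivity) (by exact_mod_cast Nat.cast_ne_zero.mpr n.factorial_ne_zero)]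
    rw [hfact]
    push_cast
    nlinarith [ih]

lemma log_factorial_le (k : ℕ) (hk : 1 ≤ k) :
    Real.log (k !) ≤ 1 + ((k:ℝ)+1) * Real.log k - k := by
  induction k with
  | zero => omega
  | succ k ih =>
    rcases Nat.eq_zero_or_pos k with h | h
    · subst h; simp
    have hk0 : (0:ℝ) < k := by exact_mod_cast h
    have key : 1 ≤ ((k:ℝ)+1) * (Real.log (k+1) - Real.log k) := by
      have : 1 - ((k+1:ℝ)/k)⁻¹ ≤ Real.log ((k+1)/k) := Real.one_sub_inv_le_log_of_pos (by positivity)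
      have hlog : Real.log (((k:ℝ)+1)/k) = Real.log (k+1) - Real.log k :=
        Real.log_div (by positivity) (by positivity)
      rw [hlog] at this
      have h2 : 1 - (((k:ℝ)+1)/k)⁻¹ = 1/(k+1) := by
        rw [inv_div]; field_simp; ring
      rw [h2] at this
      calc (1:ℝ) = ((k:ℝ)+1) * (1/(k+1)) := by field_simp
        _ ≤ _ := by apply mul_le_mul_of_nonneg_left this (by positivity)
    have hfact : Real.log ((k+1)! : ℕ) = Real.log (k+1) + Real.log (k !) := by
      push_cast [Nat.factorial_succ]
      rw [Real.log_mul (by positivity) (by exact_mod_cast Nat.cast_ne_zero.mpr k.factorial_ne_zero)]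
    rw [hfact]
    have ihh := ih h
    push_cast
    nlinarith

noncomputable def Phi (a b c γ x y : ℝ) : ℝ :=
  a*(b*x)*Real.log ((2*a*b*x + c*y)/(b*x)) + b*(a*x)*Real.log ((2*a*b*x + c*y)/(a*x))
  + c*y*Real.log ((2*a*b*x + c*y)/y) - (2*a*b*x + c*y)*Real.log γ

lemma phi_homog (a b c γ l x y : ℝ) (hl : 0 < l) :
    Phi a b c γ (l*x) (l*y) = l * Phi a b c γ x y := by
  simp only [Phi]
  rw [show 2*a*b*(l*x) + c*(l*y) = l*(2*a*b*x + c*y) from by ring]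
  rw [show b*(l*x) = l*(b*x) from by ring, show a*(l*x) = l*(a*x) from by ring]
  rw [mul_div_mul_left _ _ hl.ne', mul_div_mul_left _ _ hl.ne',
    mul_div_mul_left _ _ hl.ne']
  ring

lemma phi_cont (a b c γ x y : ℝ) (hbx : 0 < b*x) (hax : 0 < a*x) (hy : 0 < y)
    (hN : 0 < 2*a*b*x + c*y) :
    ContinuousAt (fun p : ℝ × ℝ => Phi a b c γ p.1 p.2) (x, y) := by
  have hNc : ContinuousAt (fun p : ℝ × ℝ => 2*a*b*p.1 + c*p.2) (x, y) := by fun_prop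
  have h1 : ContinuousAt (fun p : ℝ × ℝ => Real.log ((2*a*b*p.1 + c*p.2)/(b*p.1))) (x, y) :=
    ContinuousAt.log (hNc.div (by fun_prop) hbx.ne') (by positivity)
  have h2 : ContinuousAt (fun p : ℝ × ℝ => Real.log ((2*a*b*p.1 + c*p.2)/(a*p.1))) (x, y) :=
    ContinuousAt.log (hNc.div (by fun_prop) hax.ne') (by positivity)
  have h3 : ContinuousAt (fun p : ℝ × ℝ => Real.log ((2*a*b*p.1 + c*p.2)/p.2)) (x, y) :=
    ContinuousAt.log (hNc.div (by fun_prop) hy.ne') (by positivity)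
  exact ((((by fun_prop : ContinuousAt (fun p : ℝ × ℝ => (a:ℝ)*(b*p.1)) (x,y)).mul h1).add
    ((by fun_prop : ContinuousAt (fun p : ℝ × ℝ => (b:ℝ)*(a*p.1)) (x,y)).mul h2)).add
    ((by fun_prop : ContinuousAt (fun p : ℝ × ℝ => (c:ℝ)*p.2) (x,y)).mul h3)).sub
    (hNc.mul continuousAt_const)

lemma exists_good (a b c : ℕ) (ha : 0 < a) (hb : 0 < b) (hc : 0 < c) (γ : ℝ)
    (x y : ℝ) (hx : 0 < x) (hy : 0 < y) (hΦ : 0 < Phi a b c γ x y) :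
    ∃ j C : ℕ, 0 < j ∧ 0 < C ∧ 0 < Phi a b c γ j C := by
  have ha' : (0:ℝ) < a := by exact_mod_cast ha
  have hb' : (0:ℝ) < b := by exact_mod_cast hb
  have hc' : (0:ℝ) < c := by exact_mod_cast hc
  have hcont := phi_cont (a:ℝ) b c γ x y (by positivity) (by positivity) hy (by positivity)
  have hev : ∀ᶠ p : ℝ × ℝ in nhds (x, y), 0 < Phi a b c γ p.1 p.2 :=
    hcont.eventually (eventually_gt_nhds hΦ)
  rw [Metric.eventually_nhds_iff] at hev
  obtain ⟨δ, hδ, hball⟩ := hev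
  obtain ⟨q1, hq1l, hq1r⟩ := exists_rat_btwn (show x - min δ x < x by
    simp [lt_min_iff]; exact ⟨hδ, by assumption⟩)
  obtain ⟨q2, hq2l, hq2r⟩ := exists_rat_btwn (show y - min δ y < y by
    simp [lt_min_iff]; exact ⟨hδ, by assumption⟩)
  have hq1pos : (0:ℝ) < q1 := lt_of_le_of_lt (by simp [min_le_iff] : x - min δ x ≥ 0) hq1l
  have hq2pos : (0:ℝ) < q2 := lt_of_le_of_lt (by simp [min_le_iff] : y - min δ y ≥ 0) hq2l
  have hdist : dist ((q1:ℝ), (q2:ℝ)) (x, y) < δ := by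
    rw [Prod.dist_eq]
    apply max_lt
    · rw [Real.dist_eq, abs_of_nonpos (by linarith)]
      have : min δ x ≤ δ := min_le_left _ _
      linarith
    · rw [Real.dist_eq, abs_of_nonpos (by linarith)]
      have : min δ y ≤ δ := min_le_left _ _
      linarith
  have hq : 0 < Phi a b c γ q1 q2 := hball hdist
  refine ⟨q1.num.toNat * q2.den, q2.num.toNat * q1.den, ?_, ?_, ?_⟩
  · have h1 : 0 < q1.num.toNat := by
      have := Rat.num_pos.mpr (show 0 < q1 by exact_mod_cast hq1pos); omega
    exact Nat.mul_pos h1 q2.pos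
  · have h2 : 0 < q2.num.toNat := by
      have := Rat.num_pos.mpr (show 0 < q2 by exact_mod_cast hq2pos); omega
    exact Nat.mul_pos h2 q1.pos
  · have hl : (0:ℝ) < (q1.den * q2.den : ℕ) := by
      have := q1.pos; have := q2.pos; positivity
    have hnum1 : ((q1.num.toNat : ℤ) : ℝ) = (q1.num : ℝ) := by
      rw [Int.toNat_of_nonneg (Rat.num_pos.mpr (by exact_mod_cast hq1pos)).le]
    have hnum2 : ((q2.num.toNat : ℤ) : ℝ) = (q2.num : ℝ) := by
      rw [Int.toNat_of_nonneg (Rat.num_pos.mpr (by exact_mod_cast hq2pos)).le]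
    have e1 : ((q1.num.toNat * q2.den : ℕ) : ℝ) = ((q1.den * q2.den : ℕ) : ℝ) * (q1 : ℝ) := by
      push_cast
      rw [show ((q1.num.toNat : ℕ) : ℝ) = (q1.num : ℝ) from by exact_mod_cast hnum1]
      rw [Rat.cast_def]
      have : ((q1.den : ℝ)) ≠ 0 := by exact_mod_cast q1.den_nz
      field_simp
    have e2 : ((q2.num.toNat * q1.den : ℕ) : ℝ) = ((q1.den * q2.den : ℕ) : ℝ) * (q2 : ℝ) := by
      push_cast
      rw [show ((q2.num.toNat : ℕ) : ℝ) = (q2.num : ℝ) from by exact_mod_cast hnum2]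
      rw [Rat.cast_def]
      have : ((q2.den : ℝ)) ≠ 0 := by exact_mod_cast q2.den_nz
      field_simp
    rw [e1, e2, phi_homog _ _ _ _ _ _ _ hl]
    exact mul_pos hl hq

lemma phi_opt (t : ℕ) (ht : 2 ≤ t) (a b c : ℕ)
    (h2a : (2:ℝ)*(a:ℝ) = t*(t+1)) (h2b : (2:ℝ)*(b:ℝ) = t*((t:ℝ)-1))
    (hcR : (c:ℝ) = (t:ℝ)^2 - 1) (γ : ℝ) (hγ0 : 0 < γ)
    (hγ : γ < (t:ℝ)^2 - 1 + t * Real.sqrt ((t:ℝ)^2-1)) :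
    0 < Phi a b c γ ((t:ℝ) * Real.sqrt ((t:ℝ)^2-1)) (2*(a:ℝ)*(b:ℝ)) := by
  have ht2 : (2:ℝ) ≤ t := by exact_mod_cast ht
  set α := Real.sqrt ((t:ℝ)^2-1) with hαdef
  have hc1 : (0:ℝ) < (t:ℝ)^2 - 1 := by nlinarith
  have hα2 : α^2 = (t:ℝ)^2-1 := Real.sq_sqrt hc1.le
  have hαpos : 0 < α := Real.sqrt_pos.mpr hc1
  have htpos : (0:ℝ) < t := by linarith
  have haR : (0:ℝ) < a := by nlinarith
  have hbR : (0:ℝ) < b := by nlinarith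
  have h4ab : 4*(a:ℝ)*(b:ℝ) = (t:ℝ)^2*((t:ℝ)^2-1) := by nlinarith [h2a, h2b]
  set D := (t:ℝ)^2 - 1 + (t:ℝ)*α with hDdef
  clear_value α
  have hD : 0 < D := by rw [hDdef]; positivity
  clear_value D
  have hlog : Real.log γ < Real.log D := Real.log_lt_log hγ0 hγ
  have key : Phi a b c γ ((t:ℝ)*α) (2*(a:ℝ)*(b:ℝ)) = 2*a*b*D*(Real.log D - Real.log γ) := by
    simp only [Phi]
    have hN : 2*(a:ℝ)*(b:ℝ)*((t:ℝ)*α) + (c:ℝ)*(2*(a:ℝ)*(b:ℝ)) = 2*(a:ℝ)*(b:ℝ)*D := by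
      rw [hcR, hDdef]; ring
    rw [hN]
    have h3 : 2*(a:ℝ)*(b:ℝ)*D/(2*(a:ℝ)*(b:ℝ)) = D := by field_simp
    rw [h3]
    have hL : Real.log (2*(a:ℝ)*(b:ℝ)*D/((b:ℝ)*((t:ℝ)*α))) +
        Real.log (2*(a:ℝ)*(b:ℝ)*D/((a:ℝ)*((t:ℝ)*α))) = 2 * Real.log D := by
      rw [← Real.log_mul (by positivity) (by positivity)]
      rw [show (2*(a:ℝ)*(b:ℝ)*D/((b:ℝ)*((t:ℝ)*α))) * (2*(a:ℝ)*(b:ℝ)*D/((a:ℝ)*((t:ℝ)*α)))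
          = D^2 from by
        field_simp
        linear_combination h4ab - (t:ℝ)^2 * hα2]
      rw [Real.log_pow]
      norm_num
    linear_combination ((a:ℝ)*(b:ℝ)*((t:ℝ)*α))*hL + (2*(a:ℝ)*(b:ℝ)*Real.log D)*hcR
      - (2*(a:ℝ)*(b:ℝ)*Real.log D)*hDdef
  rw [key]
  have : 0 < Real.log D - Real.log γ := by linarith
  positivity

end Aux

set_option maxHeartbeats 2000000 in
/-- Lower bound for the graded codimension sequence: with `a = t(t+1)/2`,
`b = t(t−1)/2`, `c = t²−1`, `d = a+b+c`, for every `ε > 0` there are infinitely many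
positive integers `n` admitting nonnegative integers `n₁,…,n_d` with sum `n`, with the
first `a` of them and the next `b` of them having equal sums, whose multinomial
coefficient is at least `(t²−1+t√(t²−1)−ε)^n`. -/
theorem multinomial_lower_bound (t : ℕ) (ht : 2 ≤ t) (a b c d : ℕ)
    (ha : a = t * (t + 1) / 2) (hb : b = t * (t - 1) / 2) (hc : c = t ^ 2 - 1)
    (hd : d = a + b + c) :
    ∀ ε : ℝ, 0 < ε →
      {n : ℕ | 0 < n ∧ ∃ f : Fin a ⊕ Fin b ⊕ Fin c → ℕ,
        (∑ i, f i) = n ∧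
        (∑ i, f (Sum.inl i)) = (∑ i, f (Sum.inr (Sum.inl i))) ∧
        ((t : ℝ) ^ 2 - 1 + t * Real.sqrt ((t : ℝ) ^ 2 - 1) - ε) ^ n ≤
          (Nat.multinomial Finset.univ f : ℝ)}.Infinite := by
  intro ε hε
  -- arithmetic facts
  have hdvd1 : 2 ∣ t * (t + 1) := (Nat.even_mul_succ_self t).two_dvd
  have h2a : 2 * a = t * (t + 1) := by
    rw [ha]; exact Nat.mul_div_cancel' hdvd1
  have hdvd2 : 2 ∣ t * (t - 1) := by
    have : t - 1 + 1 = t := by omega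
    have h := (Nat.even_mul_succ_self (t-1)).two_dvd
    rw [this] at h
    rwa [Nat.mul_comm]
  have h2b : 2 * b = t * (t - 1) := by
    rw [hb]; exact Nat.mul_div_cancel' hdvd2
  have h6 : 6 ≤ t * (t + 1) := by
    calc 6 = 2 * 3 := rfl
    _ ≤ t * (t + 1) := Nat.mul_le_mul ht (by omega)
  have h2t : 2 ≤ t * (t - 1) := by
    calc 2 = 2 * 1 := rfl
    _ ≤ t * (t - 1) := Nat.mul_le_mul ht (by omega)
  have htt : 4 ≤ t * t := Nat.mul_le_mul ht ht
  have hsq : t ^ 2 = t * t := sq t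
  have hapos : 0 < a := by omega
  have hbpos : 0 < b := by omega
  have hcpos : 0 < c := by omega
  have hcR : (c : ℝ) = (t:ℝ)^2 - 1 := by
    rw [hc]; push_cast [Nat.cast_sub (show 1 ≤ t^2 by omega)]; ring
  have h2aR : (2:ℝ) * a = (t:ℝ) * ((t:ℝ)+1) := by exact_mod_cast h2a
  have h2bR : (2:ℝ) * b = (t:ℝ) * ((t:ℝ)-1) := by
    have := h2b
    have h1t : 1 ≤ t := by omega
    push_cast [Nat.cast_sub h1t] at this
    exact_mod_cast this
  have ht2R : (2:ℝ) ≤ t := by exact_mod_cast ht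
  have hc1 : (0:ℝ) < (t:ℝ)^2 - 1 := by nlinarith
  set D := (t:ℝ)^2 - 1 + (t:ℝ) * Real.sqrt ((t:ℝ)^2 - 1) with hDdef
  rcases le_or_gt (D - ε) 1 with hcase | hcase
  · -- trivial case: use odd n and trivial composition
    refine Set.infinite_of_injective_forall_mem (f := fun i : ℕ => 2*i+1) ?_ ?_
    · intro x y h; simp only at h; omega
    · intro i
      simp only [Set.mem_setOf_eq]
      refine ⟨by omega, ?_⟩
      refine ⟨Sum.elim (fun _ => 0) (Sum.elim (fun _ => 0)
        (fun k => if k = (⟨0, hcpos⟩ : Fin c) then 2*i+1 else 0)), ?_, ?_, ?_⟩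
      · simp [Fintype.sum_sum_type]
      · simp
      · have hM : (1:ℝ) ≤ (Nat.multinomial Finset.univ (Sum.elim (fun _ => (0:ℕ)) (Sum.elim (fun _ => (0:ℕ)) (fun k => if k = (⟨0, hcpos⟩ : Fin c) then 2*i+1 else 0)) : Fin a ⊕ Fin b ⊕ Fin c → ℕ) : ℝ) := by
          exact_mod_cast Nat.succ_le_of_lt (Nat.multinomial_pos _ _)
        refine le_trans ?_ hM
        rcases le_or_gt (D - ε) 0 with h0 | h0
        · exact le_trans (Odd.pow_nonpos ⟨i, by ring⟩ h0) zero_le_one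
        · exact pow_le_one₀ h0.le hcase
  · -- main case
    set β := D - ε with hβdef
    set γ := D - ε/2 with hγdef
    have hβpos : (0:ℝ) < β := by linarith
    have hβγ : β < γ := by rw [hβdef, hγdef]; linarith
    have hγD : γ < D := by rw [hγdef]; linarith
    have hγpos : (0:ℝ) < γ := by linarith
    obtain ⟨j, C, hj, hC, hphi⟩ := exists_good a b c hapos hbpos hcpos γ
      ((t:ℝ) * Real.sqrt ((t:ℝ)^2 - 1)) (2*(a:ℝ)*(b:ℝ))
      (by positivity)
      (by have ha' : (0:ℝ) < a := by exact_mod_cast hapos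
          have hb' : (0:ℝ) < b := by exact_mod_cast hbpos
          positivity)
      (phi_opt t ht a b c h2aR h2bR hcR γ hγpos hγD)
    have hδpos : 0 < Real.log γ - Real.log β := sub_pos.mpr (Real.log_lt_log hβpos hβγ)
    have haR : (0:ℝ) < a := by exact_mod_cast hapos
    have hbR : (0:ℝ) < b := by exact_mod_cast hbpos
    have hcRp : (0:ℝ) < c := by exact_mod_cast hcpos
    have hddpos : (0:ℝ) < (a:ℝ)+b+c := by positivity
    -- eventual bound
    have hev1 := Asymptotics.isLittleO_iff.mp Real.isLittleO_log_id_atTop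
      (show (0:ℝ) < (Real.log γ - Real.log β)/(2*((a:ℝ)+b+c)) by positivity)
    have hev2 : ∀ᶠ x : ℝ in Filter.atTop,
        ((a:ℝ)+b+c) ≤ ((Real.log γ - Real.log β)/2) * x := by
      filter_upwards [Filter.eventually_ge_atTop
        (2*((a:ℝ)+b+c)/(Real.log γ - Real.log β))] with x hx
      rw [div_le_iff₀ hδpos] at hx
      nlinarith
    have hev3 : ∀ᶠ x : ℝ in Filter.atTop, (1:ℝ) ≤ x := Filter.eventually_ge_atTop 1
    have hbig : ∀ᶠ x : ℝ in Filter.atTop,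
        ((a:ℝ)+b+c)*(1+Real.log x) ≤ (Real.log γ - Real.log β)*x := by
      filter_upwards [hev1, hev2, hev3] with x h1 h2 h3
      have hx0 : (0:ℝ) < x := by linarith
      simp only [Real.norm_eq_abs, id] at h1
      rw [abs_of_pos hx0] at h1
      have hlogabs : Real.log x ≤ |Real.log x| := le_abs_self _
      have hmul : ((a:ℝ)+b+c) * |Real.log x| ≤
          ((a:ℝ)+b+c) * ((Real.log γ - Real.log β)/(2*((a:ℝ)+b+c)) * x) :=
        mul_le_mul_of_nonneg_left h1 hddpos.le
      have heq : ((a:ℝ)+b+c) * ((Real.log γ - Real.log β)/(2*((a:ℝ)+b+c)) * x)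
          = ((Real.log γ - Real.log β)/2) * x := by
        field_simp
      rw [heq] at hmul
      have : ((a:ℝ)+b+c) * Real.log x ≤ ((Real.log γ - Real.log β)/2) * x :=
        le_trans (mul_le_mul_of_nonneg_left hlogabs hddpos.le) hmul
      nlinarith
    obtain ⟨x₀, hthr⟩ := Filter.eventually_atTop.mp hbig
    set n₀ := 2*a*b*j + c*C with hn₀def
    have hn₀pos : 0 < n₀ := by positivity
    refine Set.infinite_of_injective_forall_mem (f := fun i : ℕ => n₀ * (⌈x₀⌉₊ + i + 1)) ?_ ?_
    · intro x y h
      simp only at h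
      have := Nat.eq_of_mul_eq_mul_left hn₀pos h
      omega
    · intro i
      simp only [Set.mem_setOf_eq]
      set m := ⌈x₀⌉₊ + i + 1 with hmdef
      have hm1 : 1 ≤ m := by omega
      refine ⟨by positivity, ?_⟩
      refine ⟨Sum.elim (fun _ => b*j*m) (Sum.elim (fun _ => a*j*m) (fun _ => C*m)), ?_, ?_, ?_⟩
      · simp only [Fintype.sum_sum_type, Sum.elim_inl, Sum.elim_inr,
          Finset.sum_const, Finset.card_univ, Fintype.card_fin, smul_eq_mul]
        rw [hn₀def]; ring
      · simp only [Sum.elim_inl, Sum.elim_inr, Finset.sum_const, Finset.card_univ,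
          Fintype.card_fin, smul_eq_mul]
        ring
      · -- main bound
        have hmpos : 0 < m := by omega
        have hK1pos : 0 < b*j*m := by positivity
        have hK2pos : 0 < a*j*m := by positivity
        have hK3pos : 0 < C*m := by positivity
        have hnpos : 0 < n₀*m := by positivity
        -- nat inequalities
        have h1 : b*j ≤ n₀ := by
          rw [hn₀def]
          calc b*j ≤ 2*a*(b*j) := Nat.le_mul_of_pos_left _ (by omega)
          _ = 2*a*b*j := by ring
          _ ≤ 2*a*b*j + c*C := Nat.le_add_right _ _
        have h2 : a*j ≤ n₀ := by
          rw [hn₀def]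
          calc a*j ≤ 2*b*(a*j) := Nat.le_mul_of_pos_left _ (by omega)
          _ = 2*a*b*j := by ring
          _ ≤ 2*a*b*j + c*C := Nat.le_add_right _ _
        have h3 : C ≤ n₀ := by
          rw [hn₀def]
          calc C ≤ c*C := Nat.le_mul_of_pos_left _ hcpos
          _ ≤ 2*a*b*j + c*C := Nat.le_add_left _ _
        have hK1len : b*j*m ≤ n₀*m := Nat.mul_le_mul h1 (le_refl m)
        have hK2len : a*j*m ≤ n₀*m := Nat.mul_le_mul h2 (le_refl m)
        have hK3len : C*m ≤ n₀*m := Nat.mul_le_mul h3 (le_refl m)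
        -- scaled Phi inequality
        have hphim : 0 < Phi a b c γ ((m:ℝ)*(j:ℝ)) ((m:ℝ)*(C:ℝ)) := by
          rw [phi_homog _ _ _ _ _ _ _ (show (0:ℝ) < (m:ℝ) by positivity)]
          exact mul_pos (by positivity) hphi
        have hjmp : (0:ℝ) < (m:ℝ)*(j:ℝ) := by positivity
        have hCmp : (0:ℝ) < (m:ℝ)*(C:ℝ) := by positivity
        have hNpos : (0:ℝ) < 2*(a:ℝ)*(b:ℝ)*((m:ℝ)*(j:ℝ)) + (c:ℝ)*((m:ℝ)*(C:ℝ)) := by positivity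
        have hK1R : ((b*j*m : ℕ):ℝ) = (b:ℝ)*((m:ℝ)*(j:ℝ)) := by push_cast; ring
        have hK2R : ((a*j*m : ℕ):ℝ) = (a:ℝ)*((m:ℝ)*(j:ℝ)) := by push_cast; ring
        have hK3R : ((C*m : ℕ):ℝ) = (m:ℝ)*(C:ℝ) := by push_cast; ring
        have hnR : ((n₀*m : ℕ):ℝ) = 2*(a:ℝ)*(b:ℝ)*((m:ℝ)*(j:ℝ)) + (c:ℝ)*((m:ℝ)*(C:ℝ)) := by
          rw [hn₀def]; push_cast; ring
        simp only [Phi] at hphim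
        rw [Real.log_div hNpos.ne' (show ((b:ℝ)*((m:ℝ)*(j:ℝ))) ≠ 0 by positivity),
            Real.log_div hNpos.ne' (show ((a:ℝ)*((m:ℝ)*(j:ℝ))) ≠ 0 by positivity),
            Real.log_div hNpos.ne' (show ((m:ℝ)*(C:ℝ)) ≠ 0 by positivity)] at hphim
        rw [← hnR, ← hK1R, ← hK2R, ← hK3R] at hphim
        have hnR' : ((n₀*m : ℕ):ℝ) = (a:ℝ)*((b*j*m : ℕ):ℝ) + (b:ℝ)*((a*j*m : ℕ):ℝ)
            + (c:ℝ)*((C*m : ℕ):ℝ) := by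
          rw [hn₀def]; push_cast; ring
        -- factorial bounds
        have hfn := log_factorial_ge (n₀*m)
        have hfa := mul_le_mul_of_nonneg_left (log_factorial_le (b*j*m) hK1pos) haR.le
        have hfb := mul_le_mul_of_nonneg_left (log_factorial_le (a*j*m) hK2pos) hbR.le
        have hfc := mul_le_mul_of_nonneg_left (log_factorial_le (C*m) hK3pos) hcRp.le
        have hlog1 : Real.log ((b*j*m : ℕ):ℝ) ≤ Real.log ((n₀*m : ℕ):ℝ) :=
          Real.log_le_log (by exact_mod_cast hK1pos) (by exact_mod_cast hK1len)
        have hlog2 : Real.log ((a*j*m : ℕ):ℝ) ≤ Real.log ((n₀*m : ℕ):ℝ) :=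
          Real.log_le_log (by exact_mod_cast hK2pos) (by exact_mod_cast hK2len)
        have hlog3 : Real.log ((C*m : ℕ):ℝ) ≤ Real.log ((n₀*m : ℕ):ℝ) :=
          Real.log_le_log (by exact_mod_cast hK3pos) (by exact_mod_cast hK3len)
        have hla := mul_le_mul_of_nonneg_left hlog1 haR.le
        have hlb := mul_le_mul_of_nonneg_left hlog2 hbR.le
        have hlc := mul_le_mul_of_nonneg_left hlog3 hcRp.le
        -- threshold
        have hxn : x₀ ≤ ((n₀*m : ℕ):ℝ) := by
          calc x₀ ≤ (⌈x₀⌉₊ : ℝ) := Nat.le_ceil x₀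
          _ ≤ (m : ℝ) := by exact_mod_cast Nat.cast_le.mpr (show ⌈x₀⌉₊ ≤ m by omega)
          _ ≤ ((n₀*m : ℕ):ℝ) := by exact_mod_cast Nat.le_mul_of_pos_left _ hn₀pos
        have hstar := hthr _ hxn
        have hbridge : (a:ℝ)*((b*j*m : ℕ):ℝ)*Real.log ((n₀*m : ℕ):ℝ)
            + (b:ℝ)*((a*j*m : ℕ):ℝ)*Real.log ((n₀*m : ℕ):ℝ)
            + (c:ℝ)*((C*m : ℕ):ℝ)*Real.log ((n₀*m : ℕ):ℝ)
            = ((n₀*m : ℕ):ℝ)*Real.log ((n₀*m : ℕ):ℝ) := by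
          linear_combination (-(Real.log ((n₀*m : ℕ):ℝ))) * hnR'
        -- key log inequality
        have hTT : ((n₀*m : ℕ):ℝ)*Real.log β + ((a:ℝ)*Real.log ((b*j*m).factorial : ℕ)
            + ((b:ℝ)*Real.log ((a*j*m).factorial : ℕ) + (c:ℝ)*Real.log ((C*m).factorial : ℕ)))
            ≤ Real.log ((n₀*m).factorial : ℕ) := by
          linarith [hfn, hfa, hfb, hfc, hla, hlb, hlc, hphim, hstar, hbridge, hnR']
        -- exponentiate
        have hprodpos : (0:ℝ) < (((b*j*m).factorial : ℕ):ℝ)^a * ((((a*j*m).factorial : ℕ):ℝ)^b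
            * (((C*m).factorial : ℕ):ℝ)^c) := by positivity
        have hfactpos : (0:ℝ) < (((n₀*m).factorial : ℕ):ℝ) := by positivity
        have hkey : β^(n₀*m) * ((((b*j*m).factorial : ℕ):ℝ)^a * ((((a*j*m).factorial : ℕ):ℝ)^b
            * (((C*m).factorial : ℕ):ℝ)^c)) ≤ (((n₀*m).factorial : ℕ):ℝ) := by
          have hlhspos : (0:ℝ) < β^(n₀*m) * ((((b*j*m).factorial : ℕ):ℝ)^a * ((((a*j*m).factorial : ℕ):ℝ)^b
              * (((C*m).factorial : ℕ):ℝ)^c)) := by positivity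
          rw [← Real.exp_log hlhspos, ← Real.exp_log hfactpos]
          apply Real.exp_le_exp.mpr
          rw [Real.log_mul (by positivity) (by positivity),
              Real.log_mul (by positivity) (by positivity),
              Real.log_mul (by positivity) (by positivity),
              Real.log_pow, Real.log_pow, Real.log_pow, Real.log_pow]
          exact_mod_cast hTT
        -- multinomial identity
        have hsumN : (∑ i, (Sum.elim (fun _ => b*j*m) (Sum.elim (fun _ => a*j*m)
            (fun _ => C*m)) : Fin a ⊕ Fin b ⊕ Fin c → ℕ) i) = n₀*m := by
          simp only [Fintype.sum_sum_type, Sum.elim_inl, Sum.elim_inr,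
            Finset.sum_const, Finset.card_univ, Fintype.card_fin, smul_eq_mul]
          rw [hn₀def]; ring
        have hprodN : (∏ i, ((Sum.elim (fun _ => b*j*m) (Sum.elim (fun _ => a*j*m)
            (fun _ => C*m)) : Fin a ⊕ Fin b ⊕ Fin c → ℕ) i).factorial)
            = ((b*j*m).factorial)^a * (((a*j*m).factorial)^b * ((C*m).factorial)^c) := by
          simp only [Fintype.prod_sum_type, Sum.elim_inl, Sum.elim_inr,
            Finset.prod_const, Finset.card_univ, Fintype.card_fin]
        have hspec := Nat.multinomial_spec (Finset.univ)
          ((Sum.elim (fun _ => b*j*m) (Sum.elim (fun _ => a*j*m)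
            (fun _ => C*m)) : Fin a ⊕ Fin b ⊕ Fin c → ℕ))
        rw [hsumN, hprodN] at hspec
        have hspecR : (((b*j*m).factorial : ℕ):ℝ)^a * ((((a*j*m).factorial : ℕ):ℝ)^b * (((C*m).factorial : ℕ):ℝ)^c)
            * ((Nat.multinomial Finset.univ (Sum.elim (fun _ => b*j*m)
              (Sum.elim (fun _ => a*j*m) (fun _ => C*m)) : Fin a ⊕ Fin b ⊕ Fin c → ℕ)) : ℝ)
            = (((n₀*m).factorial : ℕ):ℝ) := by
          exact_mod_cast congrArg (Nat.cast (R := ℝ)) hspec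
        have hMdiv : ((Nat.multinomial Finset.univ (Sum.elim (fun _ => b*j*m)
              (Sum.elim (fun _ => a*j*m) (fun _ => C*m)) : Fin a ⊕ Fin b ⊕ Fin c → ℕ)) : ℝ)
            = (((n₀*m).factorial : ℕ):ℝ) / ((((b*j*m).factorial : ℕ):ℝ)^a * ((((a*j*m).factorial : ℕ):ℝ)^b
              * (((C*m).factorial : ℕ):ℝ)^c)) := by
          rw [eq_div_iff hprodpos.ne']
          linarith [hspecR]
        rw [hMdiv, le_div_iff₀ hprodpos]
        exact hkey
end
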